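/- arXiv:0907.1540 — 3 statements merged into one kernel-verified Lean document; each statement's English description precedes it below -/
import Mathlib

section
/- Two processes s and t are testing equivalent if and only if they are probabilistically ready trace equivalent: s ≈_T t ⟺ s ≈_O t. -/
inductive Proc (A : Type) where
  | nd : List (A × Proc A) → Proc A
  | pr : List (ℝ × Proc A) → Proc A

namespace Proc

variable {A : Type} [DecidableEq A]

/-- The menu of a nondeterministic state: the set of initially enabled actions. -/
def menu : Proc A → Finset A
  | nd l => (l.map Prod.fst).toFinset
  | pr _ => ∅

/-- Deterministic action transition. -/
def step : Proc A → A → Option (Proc A)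
  | nd l, a => (l.find? (fun x => x.1 = a)).map Prod.snd
  | pr _, _ => none

/-- P¹ₛ(M) : the probability that the initial menu observed is M. -/
noncomputable def P1 : Proc A → Finset A → ℝ
  | nd l, M => if (l.map Prod.fst).toFinset = M then 1 else 0
  | pr l, M => (l.attach.map (fun x => x.1.1 * P1 x.1.2 M)).sum
termination_by p _ => sizeOf p
decreasing_by
  obtain ⟨⟨r, p⟩, hmem⟩ := x
  have h := List.sizeOf_lt_of_mem hmem
  simp at h ⊢
  omega

end Proc
/-- Flattening used when a probabilistic transition would lead to a probabilistic state. -/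
def flat {A : Type} (w : ℝ) : Proc A → List (ℝ × Proc A)
  | Proc.pr l => l.map (fun x => (w * x.1, x.2))
  | q => [(w, q)]

namespace Proc

variable {A : Type} [DecidableEq A]

/-- The derived process s_{(M,a)} : the process that `s` becomes, given that the
menu `M` was offered and the action `a ∈ M` was performed. -/
noncomputable def after : Proc A → Finset A → A → Option (Proc A)
  | nd l, M, a => if (l.map Prod.fst).toFinset = M then step (nd l) a else none
  | pr l, M, a =>
      let sel := l.filter (fun x => x.2.menu = M)
      let tot := (sel.map Prod.fst).sum
      let entries := sel.flatMap (fun x =>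
        match x.2.step a with
        | none => []
        | some q => flat (x.1 / tot) q)
      if entries.isEmpty then none else some (pr entries)

/-- The conditional ready-trace probability
`P_sⁿ(M | M₁,a₁,…,a_{n-1})`, where `none` represents undefinedness. -/
noncomputable def Pn : Proc A → List (Finset A × A) → Finset A → Option ℝ
  | s, [], M => some (P1 s M)
  | s, Ma :: rest, M =>
      if 0 < P1 s Ma.1 then (after s Ma.1 Ma.2).bind (fun s' => Pn s' rest M)
      else none

/-- Probabilistic ready trace equivalence `≈_O`. -/
noncomputable def RTEquiv (s t : Proc A) : Prop :=
  ∀ (tr : List (Finset A × A)) (M : Finset A), Pn s tr M = Pn t tr M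

/-- Well-formed process graphs: action-deterministic menus, probabilities in (0,1]
summing to one, and probabilistic transitions leading to nondeterministic states. -/
inductive WF : Proc A → Prop
  | nd (l : List (A × Proc A)) :
      (l.map Prod.fst).Nodup → (∀ x ∈ l, WF x.2) → WF (.nd l)
  | pr (l : List (ℝ × Proc A)) :
      (∀ x ∈ l, 0 < x.1 ∧ x.1 ≤ 1 ∧ ∃ l', x.2 = Proc.nd l') →
      (l.map Prod.fst).sum = 1 →
      (∀ x ∈ l, WF x.2) → WF (.pr l)

end Proc
/-- The field of rational functions whose argument names are the action labels. -/
abbrev RF (A : Type) := FractionRing (MvPolynomial A ℝ)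

/-- The rational function consisting of the single variable named by action `a`. -/
noncomputable def RVar {A : Type} (a : A) : RF A :=
  algebraMap (MvPolynomial A ℝ) (RF A) (MvPolynomial.X a)

namespace Proc

variable {A : Type} [DecidableEq A]

/-- A state can immediately report success. -/
def hasOmega (ω : A) : Proc A → Prop
  | nd l => ω ∈ l.map Prod.fst
  | pr _ => False

/-- `ResRel ω s T r` : the result of testing process `s` with test `T` is the
rational function `r` (ω is the success action of tests). -/
inductive ResRel (ω : A) : Proc A → Proc A → RF A → Prop
  | success (s : Proc A) (l : List (A × Proc A)) (h : ω ∈ l.map Prod.fst) :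
      ResRel ω s (.nd l) 1
  | probL (l : List (ℝ × Proc A)) (T : Proc A) (r : ℝ × Proc A → RF A)
      (hT : ¬ hasOmega ω T)
      (h : ∀ x ∈ l, ResRel ω x.2 T (r x)) :
      ResRel ω (.pr l) T ((l.map (fun x => algebraMap ℝ (RF A) x.1 * r x)).sum)
  | probR (l : List (A × Proc A)) (l' : List (ℝ × Proc A)) (r : ℝ × Proc A → RF A)
      (h : ∀ x ∈ l', ResRel ω (.nd l) x.2 (r x)) :
      ResRel ω (.nd l) (.pr l') ((l'.map (fun x => algebraMap ℝ (RF A) x.1 * r x)).sum)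
  | sync (l l' : List (A × Proc A)) (r : A → RF A)
      (hω : ω ∉ l'.map Prod.fst)
      (h : ∀ a ∈ (l.map Prod.fst).toFinset ∩ (l'.map Prod.fst).toFinset,
        ∀ sa Ta, Proc.step (.nd l) a = some sa → Proc.step (.nd l') a = some Ta →
          ResRel ω sa Ta (r a)) :
      ResRel ω (.nd l) (.nd l')
        (∑ a ∈ (l.map Prod.fst).toFinset ∩ (l'.map Prod.fst).toFinset,
          (RVar a / ∑ b ∈ (l.map Prod.fst).toFinset ∩ (l'.map Prod.fst).toFinset, RVar b) * r a)

/-- Testing equivalence `≈_T` : equal testing results for every test. -/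
def TestEquiv (ω : A) (s t : Proc A) : Prop :=
  ∀ T : Proc A, WF T → ∀ r : RF A, (ResRel ω s T r ↔ ResRel ω t T r)

/-- Processes (as opposed to tests) never perform the success action ω. -/
inductive NoOmega (ω : A) : Proc A → Prop
  | nd (l : List (A × Proc A)) :
      ω ∉ l.map Prod.fst → (∀ x ∈ l, NoOmega ω x.2) → NoOmega ω (.nd l)
  | pr (l : List (ℝ × Proc A)) :
      (∀ x ∈ l, NoOmega ω x.2) → NoOmega ω (.pr l)

/-- Processes with no probabilistic transitions at all. -/
inductive NoProb : Proc A → Prop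
  | nd (l : List (A × Proc A)) : (∀ x ∈ l, NoProb x.2) → NoProb (.nd l)

end Proc

set_option linter.unusedSectionVars false

namespace Proc

variable {A : Type} [DecidableEq A]

/-! ### List sum helpers -/

theorem listsum_finsetsum {α γ M : Type*} [AddCommMonoid M]
    (l : List α) (s : Finset γ) (f : α → γ → M) :
    (l.map (fun x => ∑ g ∈ s, f x g)).sum = ∑ g ∈ s, (l.map (fun x => f x g)).sum := by
  induction l with
  | nil => simp
  | cons a l ih => simp [ih, Finset.sum_add_distrib]

theorem listsum_add {α M : Type*} [AddCommMonoid M] (l : List α) (f g : α → M) :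
    (l.map (fun x => f x + g x)).sum = (l.map f).sum + (l.map g).sum := by
  induction l with
  | nil => simp
  | cons a l ih => simp only [List.map_cons, List.sum_cons, ih]; abel

theorem listsum_zero {α M : Type*} [AddCommMonoid M] (l : List α) :
    (l.map (fun _ => (0 : M))).sum = 0 := by
  induction l with
  | nil => simp
  | cons a l ih => simp [ih]

theorem listsum_listsum {α β M : Type*} [AddCommMonoid M]
    (l : List α) (l' : List β) (f : α → β → M) :
    (l.map (fun x => (l'.map (f x)).sum)).sum
      = (l'.map (fun y => (l.map (fun x => f x y)).sum)).sum := by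
  induction l with
  | nil => simp [listsum_zero]
  | cons a l ih =>
    simp only [List.map_cons, List.sum_cons, ih, ← listsum_add]

theorem mul_listsum {α M : Type*} [NonUnitalNonAssocSemiring M] (c : M) (l : List α) (f : α → M) :
    c * (l.map f).sum = (l.map (fun x => c * f x)).sum := by
  induction l with
  | nil => simp
  | cons a l ih => simp [mul_add, ih]

/-! ### Basic facts about `step` -/

theorem step_some_mem {l : List (A × Proc A)} {a : A} {q : Proc A}
    (h : step (nd l) a = some q) : ∃ x ∈ l, x.1 = a ∧ x.2 = q := by
  simp only [step, Option.map_eq_some_iff] at h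
  obtain ⟨x, hx, rfl⟩ := h
  refine ⟨x, List.mem_of_find?_eq_some hx, ?_, rfl⟩
  have := List.find?_some hx
  simpa using this

theorem step_some_size {l : List (A × Proc A)} {a : A} {q : Proc A}
    (h : step (nd l) a = some q) : sizeOf q < sizeOf (nd l) := by
  obtain ⟨x, hx, -, rfl⟩ := step_some_mem h
  have h2 := List.sizeOf_lt_of_mem hx
  obtain ⟨a', q⟩ := x
  simp at h2 ⊢
  omega

theorem step_isSome {l : List (A × Proc A)} {a : A}
    (h : a ∈ (l.map Prod.fst).toFinset) : ∃ q, step (nd l) a = some q := by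
  rw [List.mem_toFinset, List.mem_map] at h
  obtain ⟨x, hx, rfl⟩ := h
  have : (l.find? (fun y => y.1 = x.1)).isSome := by
    rw [List.find?_isSome]
    exact ⟨x, hx, by simp⟩
  obtain ⟨y, hy⟩ := Option.isSome_iff_exists.1 this
  exact ⟨y.2, by simp [step, hy]⟩

theorem mem_sizeOf_nd {l : List (A × Proc A)} {x : A × Proc A} (hx : x ∈ l) :
    sizeOf x.2 < sizeOf (nd l) := by
  have h2 := List.sizeOf_lt_of_mem hx
  obtain ⟨a', q⟩ := x
  simp at h2 ⊢
  omega

theorem mem_sizeOf_pr {l : List (ℝ × Proc A)} {x : ℝ × Proc A} (hx : x ∈ l) :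
    sizeOf x.2 < sizeOf (pr l) := by
  have h2 := List.sizeOf_lt_of_mem hx
  obtain ⟨a', q⟩ := x
  simp at h2 ⊢
  omega

/-! ### Uniqueness and totality of testing results -/

theorem resrel_unique {ω : A} {s T : Proc A} {r1 : RF A} (h1 : ResRel ω s T r1) :
    ∀ r2, ResRel ω s T r2 → r1 = r2 := by
  induction h1 with
  | success s l h =>
    intro r2 h2
    cases h2 with
    | success => rfl
    | probL l' T r hT h' => exact absurd h hT
    | sync l0 l' r hω h' => exact absurd h hω
  | probL l T r hT h ih =>
    intro r2 h2
    cases h2 with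
    | success s l' hω => exact absurd hω hT
    | probL l' T r' hT' h' =>
      congr 1
      exact List.map_congr_left (fun x hx => by rw [ih x hx _ (h' x hx)])
  | probR l l' r h ih =>
    intro r2 h2
    cases h2 with
    | probR l0 l'' r' h' =>
      congr 1
      exact List.map_congr_left (fun x hx => by rw [ih x hx _ (h' x hx)])
  | sync l l' r hω h ih =>
    intro r2 h2
    cases h2 with
    | success _ _ hω' => exact absurd hω' hω
    | sync l0 l'' r' hω' h' =>
      refine Finset.sum_congr rfl (fun a ha => ?_)
      obtain ⟨sa, hsa⟩ := step_isSome (Finset.mem_inter.1 ha).1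
      obtain ⟨Ta, hTa⟩ := step_isSome (Finset.mem_inter.1 ha).2
      rw [ih a ha sa Ta hsa hTa _ (h' a ha sa Ta hsa hTa)]

theorem resrel_total (ω : A) : ∀ (n : ℕ) (s T : Proc A), sizeOf s + sizeOf T ≤ n →
    ∃ r, ResRel ω s T r := by
  intro n
  induction n with
  | zero => intro s T h; cases s <;> simp at h
  | succ n ih =>
    intro s T hn
    match T with
    | nd l' =>
      by_cases hω : ω ∈ l'.map Prod.fst
      · exact ⟨1, .success s l' hω⟩
      · match s with
        | nd l =>
          have key : ∀ a : A, ∃ ra : RF A, ∀ sa Ta, step (nd l) a = some sa →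
              step (nd l') a = some Ta → ResRel ω sa Ta ra := by
            intro a
            by_cases ha : (step (nd l) a).isSome ∧ (step (nd l') a).isSome
            · obtain ⟨q, hq⟩ := Option.isSome_iff_exists.1 ha.1
              obtain ⟨q', hq'⟩ := Option.isSome_iff_exists.1 ha.2
              have h1 := step_some_size hq
              have h2 := step_some_size hq'
              obtain ⟨r, hr⟩ := ih q q' (by omega)
              refine ⟨r, fun sa Ta hsa hTa => ?_⟩
              rw [hq] at hsa; rw [hq'] at hTa
              cases hsa; cases hTa; exact hr
            · refine ⟨0, fun sa Ta hsa hTa => absurd ⟨?_, ?_⟩ ha⟩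
              · simp [hsa]
              · simp [hTa]
          choose r hr using key
          exact ⟨_, .sync l l' r hω (fun a _ sa Ta h1 h2 => hr a sa Ta h1 h2)⟩
        | pr l =>
          have key : ∀ x : ℝ × Proc A, ∃ rx : RF A, x ∈ l → ResRel ω x.2 (nd l') rx := by
            intro x
            by_cases hx : x ∈ l
            · have := mem_sizeOf_pr hx
              obtain ⟨r, hr⟩ := ih x.2 (nd l') (by omega)
              exact ⟨r, fun _ => hr⟩
            · exact ⟨0, fun h => absurd h hx⟩
          choose r hr using key
          exact ⟨_, .probL l (nd l') r (by simpa [hasOmega] using hω) (fun x hx => hr x hx)⟩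
    | pr l' =>
      match s with
      | nd l =>
        have key : ∀ x : ℝ × Proc A, ∃ rx : RF A, x ∈ l' → ResRel ω (nd l) x.2 rx := by
          intro x
          by_cases hx : x ∈ l'
          · have := mem_sizeOf_pr hx
            obtain ⟨r, hr⟩ := ih (nd l) x.2 (by omega)
            exact ⟨r, fun _ => hr⟩
          · exact ⟨0, fun h => absurd h hx⟩
        choose r hr using key
        exact ⟨_, .probR l l' r (fun x hx => hr x hx)⟩
      | pr l =>
        have key : ∀ x : ℝ × Proc A, ∃ rx : RF A, x ∈ l → ResRel ω x.2 (pr l') rx := by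
          intro x
          by_cases hx : x ∈ l
          · have h1 := mem_sizeOf_pr hx
            obtain ⟨r, hr⟩ := ih x.2 (pr l') (by omega)
            exact ⟨r, fun _ => hr⟩
          · exact ⟨0, fun h => absurd h hx⟩
        choose r hr using key
        exact ⟨_, .probL l (pr l') r (by simp [hasOmega]) (fun x hx => hr x hx)⟩

/-- The testing result, as a function. -/
noncomputable def resF (ω : A) (s T : Proc A) : RF A :=
  (resrel_total ω (sizeOf s + sizeOf T) s T le_rfl).choose

theorem resF_spec (ω : A) (s T : Proc A) : ResRel ω s T (resF ω s T) :=
  (resrel_total ω (sizeOf s + sizeOf T) s T le_rfl).choose_spec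

theorem resF_eq {ω : A} {s T : Proc A} {r : RF A} (h : ResRel ω s T r) :
    resF ω s T = r :=
  resrel_unique (resF_spec ω s T) r h

end Proc
namespace Proc

variable {A : Type} [DecidableEq A]

/-! ### Derived total step/after functions and resF equations -/

def stepD (s : Proc A) (a : A) : Proc A := (step s a).getD (nd [])

noncomputable def afterD (s : Proc A) (M : Finset A) (a : A) : Proc A :=
  (after s M a).getD (nd [])

theorem res_success {ω : A} {l' : List (A × Proc A)} (s : Proc A)
    (hω : ω ∈ l'.map Prod.fst) : resF ω s (nd l') = 1 :=
  resF_eq (.success s l' hω)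

theorem res_probL {ω : A} {T : Proc A} (l : List (ℝ × Proc A)) (hT : ¬ hasOmega ω T) :
    resF ω (pr l) T = (l.map (fun x => algebraMap ℝ (RF A) x.1 * resF ω x.2 T)).sum :=
  resF_eq (.probL l T (fun x => resF ω x.2 T) hT (fun x _ => resF_spec ω x.2 T))

theorem res_probR {ω : A} (l : List (A × Proc A)) (l' : List (ℝ × Proc A)) :
    resF ω (nd l) (pr l')
      = (l'.map (fun x => algebraMap ℝ (RF A) x.1 * resF ω (nd l) x.2)).sum :=
  resF_eq (.probR l l' (fun x => resF ω (nd l) x.2) (fun x _ => resF_spec ω (nd l) x.2))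

theorem res_sync {ω : A} (l l' : List (A × Proc A)) (hω : ω ∉ l'.map Prod.fst) :
    resF ω (nd l) (nd l')
      = ∑ a ∈ (l.map Prod.fst).toFinset ∩ (l'.map Prod.fst).toFinset,
          (RVar a / ∑ b ∈ (l.map Prod.fst).toFinset ∩ (l'.map Prod.fst).toFinset, RVar b) *
            resF ω (stepD (nd l) a) (stepD (nd l') a) :=
  resF_eq (.sync l l' (fun a => resF ω (stepD (nd l) a) (stepD (nd l') a)) hω
    (fun a _ sa Ta hsa hTa => by
      simp only [stepD, hsa, hTa, Option.getD_some]
      exact resF_spec ω sa Ta))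

theorem res_nil {ω : A} (s : Proc A) : resF ω s (nd ([] : List (A × Proc A))) = 0 := by
  suffices h : ∀ (n : ℕ) (s : Proc A), sizeOf s ≤ n →
      resF ω s (nd ([] : List (A × Proc A))) = 0 from h (sizeOf s) s le_rfl
  intro n
  induction n with
  | zero => intro s h; cases s <;> simp at h
  | succ n ih =>
    intro s hs
    cases s with
    | nd l =>
      rw [res_sync l [] (by simp)]
      simp
    | pr l =>
      rw [res_probL l (by simp [hasOmega])]
      rw [List.map_congr_left (g := fun _ => (0 : RF A)) (fun x hx => ?_), listsum_zero]
      have := mem_sizeOf_pr hx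
      rw [ih x.2 (by omega), mul_zero]

theorem res_lin {ω : A} {l : List (ℝ × Proc A)} (hl : WF (pr l)) (T : Proc A) :
    resF ω (pr l) T = (l.map (fun x => algebraMap ℝ (RF A) x.1 * resF ω x.2 T)).sum := by
  cases T with
  | pr l' => exact res_probL l (by simp [hasOmega])
  | nd l' =>
    by_cases hω : ω ∈ l'.map Prod.fst
    · rw [res_success _ hω]
      rw [List.map_congr_left (g := fun x => algebraMap ℝ (RF A) x.1)
        (fun x hx => by rw [res_success _ hω, mul_one])]
      cases hl with
      | pr _ _ hsum _ =>
        rw [show l.map (fun x => algebraMap ℝ (RF A) x.1)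
              = (l.map Prod.fst).map (algebraMap ℝ (RF A)) from by rw [List.map_map]; rfl]
        rw [← map_list_sum, hsum, map_one]
    · exact res_probL l (by simpa [hasOmega] using hω)

theorem res_prr {ω : A} {s : Proc A} (hs : WF s) (l' : List (ℝ × Proc A)) :
    resF ω s (pr l') = (l'.map (fun y => algebraMap ℝ (RF A) y.1 * resF ω s y.2)).sum := by
  cases s with
  | nd l => exact res_probR l l'
  | pr l =>
    have hshape : ∀ x ∈ l, ∃ l'', x.2 = Proc.nd l'' := by
      cases hs with | pr _ hsh _ _ => exact fun x hx => (hsh x hx).2.2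
    rw [res_probL l (by simp [hasOmega])]
    have h1 : ∀ x ∈ l, resF ω x.2 (pr l')
        = (l'.map (fun y => algebraMap ℝ (RF A) y.1 * resF ω x.2 y.2)).sum := by
      intro x hx
      obtain ⟨l'', hx2⟩ := hshape x hx
      rw [hx2]; exact res_probR _ _
    rw [List.map_congr_left (fun x hx => by rw [h1 x hx, mul_listsum])]
    rw [listsum_listsum]
    refine congrArg List.sum (List.map_congr_left (fun y _ => ?_))
    rw [res_lin hs y.2, mul_listsum]
    exact congrArg List.sum (List.map_congr_left (fun x _ => by ring))

/-! ### menus and acts -/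

noncomputable def menus : Proc A → Finset (Finset A)
  | nd l => {(l.map Prod.fst).toFinset}
  | pr l => (l.attach.map (fun x => menus x.1.2)).foldr (· ∪ ·) ∅
termination_by p => sizeOf p
decreasing_by
  obtain ⟨⟨r, p⟩, hmem⟩ := x
  have h := List.sizeOf_lt_of_mem hmem
  simp at h ⊢
  omega

noncomputable def acts : Proc A → Finset A
  | nd l => (l.map Prod.fst).toFinset ∪ (l.attach.map (fun x => acts x.1.2)).foldr (· ∪ ·) ∅
  | pr l => (l.attach.map (fun x => acts x.1.2)).foldr (· ∪ ·) ∅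
termination_by p => sizeOf p
decreasing_by
  all_goals
  · obtain ⟨⟨r, p⟩, hmem⟩ := x
    have h := List.sizeOf_lt_of_mem hmem
    simp at h ⊢
    omega

theorem mem_foldr_union {α γ : Type*} [DecidableEq γ] (l : List α) (f : α → Finset γ) (x : γ) :
    x ∈ (l.map f).foldr (· ∪ ·) ∅ ↔ ∃ a ∈ l, x ∈ f a := by
  induction l with
  | nil => simp
  | cons a l ih => simp [ih]

theorem attach_map_eq {α β : Type*} (l : List α) (f : α → β) :
    l.attach.map (fun x => f x.1) = l.map f := by
  rw [← List.attach_map_val (l := l) (f := f)]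

theorem menus_nd (l : List (A × Proc A)) :
    menus (nd l) = {(l.map Prod.fst).toFinset} := by rw [menus]

theorem mem_menus_pr {l : List (ℝ × Proc A)} {M : Finset A} :
    M ∈ menus (pr l) ↔ ∃ x ∈ l, M ∈ menus x.2 := by
  rw [menus, attach_map_eq l (fun x => menus x.2), mem_foldr_union]

theorem mem_acts_nd {l : List (A × Proc A)} {a : A} :
    a ∈ acts (nd l) ↔ a ∈ (l.map Prod.fst).toFinset ∨ ∃ x ∈ l, a ∈ acts x.2 := by
  rw [acts, attach_map_eq l (fun x => acts x.2)]
  simp [mem_foldr_union]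

theorem mem_acts_pr {l : List (ℝ × Proc A)} {a : A} :
    a ∈ acts (pr l) ↔ ∃ x ∈ l, a ∈ acts x.2 := by
  rw [acts, attach_map_eq l (fun x => acts x.2), mem_foldr_union]

theorem menu_subset_acts : ∀ (s : Proc A) (M : Finset A), M ∈ menus s → M ⊆ acts s := by
  suffices h : ∀ (n : ℕ) (s : Proc A), sizeOf s ≤ n → ∀ M ∈ menus s, M ⊆ acts s from
    fun s => h (sizeOf s) s le_rfl
  intro n
  induction n with
  | zero => intro s h; cases s <;> simp at h
  | succ n ih =>
    intro s hs M hM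
    cases s with
    | nd l =>
      rw [menus_nd, Finset.mem_singleton] at hM
      subst hM
      intro a ha
      exact mem_acts_nd.2 (Or.inl ha)
    | pr l =>
      obtain ⟨x, hx, hMx⟩ := mem_menus_pr.1 hM
      have := mem_sizeOf_pr hx
      intro a ha
      exact mem_acts_pr.2 ⟨x, hx, ih x.2 (by omega) M hMx ha⟩

theorem noOmega_acts {ω : A} : ∀ (s : Proc A), NoOmega ω s → ω ∉ acts s := by
  suffices h : ∀ (n : ℕ) (s : Proc A), sizeOf s ≤ n → NoOmega ω s → ω ∉ acts s from
    fun s => h (sizeOf s) s le_rfl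
  intro n
  induction n with
  | zero => intro s h; cases s <;> simp at h
  | succ n ih =>
    intro s hs hno
    cases hno with
    | nd l hω hch =>
      intro hmem
      rcases mem_acts_nd.1 hmem with h | ⟨x, hx, h⟩
      · exact hω (by simpa using h)
      · have := mem_sizeOf_nd hx
        exact ih x.2 (by omega) (hch x hx) h
    | pr l hch =>
      intro hmem
      obtain ⟨x, hx, h⟩ := mem_acts_pr.1 hmem
      have := mem_sizeOf_pr hx
      exact ih x.2 (by omega) (hch x hx) h

/-! ### P1 lemmas -/

theorem P1_nd (l : List (A × Proc A)) (M : Finset A) :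
    P1 (nd l) M = if (l.map Prod.fst).toFinset = M then 1 else 0 := by rw [P1]

theorem P1_pr (l : List (ℝ × Proc A)) (M : Finset A) :
    P1 (pr l) M = (l.map (fun x => x.1 * P1 x.2 M)).sum := by
  rw [P1, attach_map_eq l (fun x => x.1 * P1 x.2 M)]

theorem listsum_nonneg (l : List ℝ) (h : ∀ x ∈ l, 0 ≤ x) : 0 ≤ l.sum := by
  induction l with
  | nil => simp
  | cons a l ih =>
    simp only [List.sum_cons]
    have := h a (by simp)
    have := ih (fun x hx => h x (by simp [hx]))
    linarith

theorem listsum_pos {α : Type*} (l : List α) (f : α → ℝ) (h0 : ∀ x ∈ l, 0 ≤ f x)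
    {x0 : α} (hx0 : x0 ∈ l) (hpos : 0 < f x0) : 0 < (l.map f).sum := by
  induction l with
  | nil => simp at hx0
  | cons a l ih =>
    simp only [List.map_cons, List.sum_cons]
    rcases List.mem_cons.1 hx0 with rfl | hx0'
    · have : 0 ≤ (l.map f).sum :=
        listsum_nonneg _ (by
          intro x hx
          obtain ⟨y, hy, rfl⟩ := List.mem_map.1 hx
          exact h0 y (by simp [hy]))
      linarith
    · have h1 := ih (fun x hx => h0 x (by simp [hx])) hx0'
      have h2 := h0 a (by simp)
      linarith

theorem single_le_listsum {α : Type*} (l : List α) (f : α → ℝ) (h0 : ∀ x ∈ l, 0 ≤ f x)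
    {x0 : α} (hx0 : x0 ∈ l) : f x0 ≤ (l.map f).sum := by
  induction l with
  | nil => simp at hx0
  | cons a l ih =>
    simp only [List.map_cons, List.sum_cons]
    have hsum : 0 ≤ (l.map f).sum :=
      listsum_nonneg _ (by
        intro x hx
        obtain ⟨y, hy, rfl⟩ := List.mem_map.1 hx
        exact h0 y (by simp [hy]))
    rcases List.mem_cons.1 hx0 with rfl | hx0'
    · linarith
    · have h1 := ih (fun x hx => h0 x (by simp [hx])) hx0'
      have h2 := h0 a (by simp)
      linarith

theorem P1_nonneg {s : Proc A} (hs : WF s) (M : Finset A) : 0 ≤ P1 s M := by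
  suffices h : ∀ (n : ℕ) (s : Proc A), sizeOf s ≤ n → WF s → 0 ≤ P1 s M from
    h (sizeOf s) s le_rfl hs
  intro n
  induction n with
  | zero => intro s h; cases s <;> simp at h
  | succ n ih =>
    intro s hsz hwf
    cases s with
    | nd l => rw [P1_nd]; split <;> norm_num
    | pr l =>
      rw [P1_pr]
      refine listsum_nonneg _ ?_
      intro x hx
      obtain ⟨y, hy, rfl⟩ := List.mem_map.1 hx
      have hsz' := mem_sizeOf_pr hy
      cases hwf with
      | pr _ hsh _ hch =>
        exact mul_nonneg (hsh y hy).1.le (ih y.2 (by omega) (hch y hy))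

theorem P1_pos_iff {s : Proc A} (hs : WF s) (M : Finset A) :
    0 < P1 s M ↔ M ∈ menus s := by
  suffices h : ∀ (n : ℕ) (s : Proc A), sizeOf s ≤ n → WF s → (0 < P1 s M ↔ M ∈ menus s) from
    h (sizeOf s) s le_rfl hs
  intro n
  induction n with
  | zero => intro s h; cases s <;> simp at h
  | succ n ih =>
    intro s hsz hwf
    cases s with
    | nd l =>
      rw [P1_nd, menus_nd, Finset.mem_singleton]
      by_cases h : (l.map Prod.fst).toFinset = M
      · simp [h]
      · rw [if_neg h]
        simp only [lt_self_iff_false, false_iff]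
        exact fun hM => h hM.symm
    | pr l =>
      rw [P1_pr, mem_menus_pr]
      cases hwf with
      | pr _ hsh _ hch =>
        constructor
        · intro hpos
          by_contra hne
          push_neg at hne
          have : ∀ x ∈ l, x.1 * P1 x.2 M = 0 := by
            intro x hx
            have hsz' := mem_sizeOf_pr hx
            have h0 : P1 x.2 M = 0 := by
              have hni := hne x hx
              have := (ih x.2 (by omega) (hch x hx)).not.2 hni
              have hn0 := P1_nonneg (hch x hx) M
              push_neg at this
              linarith
            rw [h0, mul_zero]
          rw [List.map_congr_left (g := fun _ => (0:ℝ)) this, listsum_zero] at hpos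
          exact lt_irrefl 0 hpos
        · rintro ⟨x, hx, hMx⟩
          have hsz' := mem_sizeOf_pr hx
          refine listsum_pos l _ ?_ hx ?_
          · intro y hy
            exact mul_nonneg (hsh y hy).1.le (P1_nonneg (hch y hy) M)
          · exact mul_pos (hsh x hx).1 ((ih x.2 (by omega) (hch x hx)).2 hMx)

theorem P1_eq_zero {s : Proc A} (hs : WF s) {M : Finset A} (h : M ∉ menus s) :
    P1 s M = 0 := by
  have h1 := (P1_pos_iff hs M).not.2 h
  have h2 := P1_nonneg hs M
  push_neg at h1
  linarith

theorem P1_sum_one {s : Proc A} (hs : WF s) {𝓝 : Finset (Finset A)}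
    (h𝓝 : menus s ⊆ 𝓝) : ∑ M ∈ 𝓝, P1 s M = 1 := by
  suffices h : ∀ (n : ℕ) (s : Proc A), sizeOf s ≤ n → WF s →
      ∀ 𝓝 : Finset (Finset A), menus s ⊆ 𝓝 → ∑ M ∈ 𝓝, P1 s M = 1 from
    h (sizeOf s) s le_rfl hs 𝓝 h𝓝
  intro n
  induction n with
  | zero => intro s h; cases s <;> simp at h
  | succ n ih =>
    intro s hsz hwf 𝓝 h𝓝
    cases s with
    | nd l =>
      have hmem : (l.map Prod.fst).toFinset ∈ 𝓝 := h𝓝 (by rw [menus_nd]; simp)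
      simp only [P1_nd]
      rw [Finset.sum_ite_eq 𝓝 ((l.map Prod.fst).toFinset) (fun _ => (1:ℝ)), if_pos hmem]
    | pr l =>
      simp only [P1_pr]
      rw [← listsum_finsetsum]
      cases hwf with
      | pr _ hsh hsum hch =>
        have : ∀ x ∈ l, (∑ M ∈ 𝓝, x.1 * P1 x.2 M) = x.1 := by
          intro x hx
          have hsz' := mem_sizeOf_pr hx
          rw [← Finset.mul_sum, ih x.2 (by omega) (hch x hx) 𝓝
            (fun M hM => h𝓝 (mem_menus_pr.2 ⟨x, hx, hM⟩)), mul_one]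
        rw [List.map_congr_left (g := Prod.fst) this]
        exact hsum

end Proc
namespace Proc

variable {A : Type} [DecidableEq A]

/-! ### more list helpers -/

theorem listsum_indicator {α : Type*} (l : List α) (p : α → Bool) (f : α → ℝ) :
    (l.map (fun x => if p x then f x else 0)).sum = ((l.filter p).map f).sum := by
  induction l with
  | nil => simp
  | cons a l ih =>
    by_cases h : p a <;> simp [List.filter_cons, h, ih]

theorem listsum_flatMap {α β M : Type*} [AddCommMonoid M] (l : List α) (f : α → List β)
    (g : β → M) : ((l.flatMap f).map g).sum = (l.map (fun x => ((f x).map g).sum)).sum := by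
  induction l with
  | nil => simp
  | cons a l ih => simp [ih]

theorem listsum_mul_right {α : Type*} (l : List α) (f : α → ℝ) (c : ℝ) :
    (l.map (fun x => f x * c)).sum = (l.map f).sum * c := by
  induction l with
  | nil => simp
  | cons a l ih => simp [ih, add_mul]

/-! ### flat lemmas -/

theorem flat_nd (w : ℝ) (l : List (A × Proc A)) : flat w (nd l) = [(w, nd l)] := rfl

theorem flat_pr (w : ℝ) (l : List (ℝ × Proc A)) :
    flat w (pr l) = l.map (fun x => (w * x.1, x.2)) := rfl

theorem flat_ne_nil {q : Proc A} (hq : WF q) (w : ℝ) : flat w q ≠ [] := by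
  cases q with
  | nd l => simp [flat_nd]
  | pr l =>
    cases hq with
    | pr _ _ hsum _ =>
      simp only [flat_pr, ne_eq, List.map_eq_nil_iff]
      rintro rfl
      simp at hsum

theorem flat_fst_sum {q : Proc A} (hq : WF q) (w : ℝ) :
    ((flat w q).map Prod.fst).sum = w := by
  cases q with
  | nd l => simp [flat_nd]
  | pr l =>
    cases hq with
    | pr _ _ hsum _ =>
      simp only [flat_pr, List.map_map]
      have : ((l.map (Prod.fst ∘ fun x => (w * x.1, x.2)))).sum
          = (l.map (fun x => w * x.1)).sum := by rfl
      rw [this, ← mul_listsum, hsum, mul_one]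

/-! ### step / child lemmas -/

theorem wf_child_nd {l : List (A × Proc A)} (h : WF (nd l)) {x : A × Proc A} (hx : x ∈ l) :
    WF x.2 := by cases h with | nd _ _ hch => exact hch x hx

theorem wf_child_pr {l : List (ℝ × Proc A)} (h : WF (pr l)) {x : ℝ × Proc A} (hx : x ∈ l) :
    WF x.2 := by cases h with | pr _ _ _ hch => exact hch x hx

theorem wf_step {s q : Proc A} (hs : WF s) {a : A} (h : step s a = some q) : WF q := by
  cases s with
  | nd l =>
    obtain ⟨x, hx, -, rfl⟩ := step_some_mem h
    exact wf_child_nd hs hx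
  | pr l => simp [step] at h

theorem noomega_child_nd {ω : A} {l : List (A × Proc A)} (h : NoOmega ω (nd l))
    {x : A × Proc A} (hx : x ∈ l) : NoOmega ω x.2 := by
  cases h with | nd _ _ hch => exact hch x hx

theorem noomega_child_pr {ω : A} {l : List (ℝ × Proc A)} (h : NoOmega ω (pr l))
    {x : ℝ × Proc A} (hx : x ∈ l) : NoOmega ω x.2 := by
  cases h with | pr _ hch => exact hch x hx

theorem noomega_step {ω : A} {s q : Proc A} (hs : NoOmega ω s) {a : A}
    (h : step s a = some q) : NoOmega ω q := by
  cases s with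
  | nd l =>
    obtain ⟨x, hx, -, rfl⟩ := step_some_mem h
    exact noomega_child_nd hs hx
  | pr l => simp [step] at h

theorem acts_child_nd {l : List (A × Proc A)} {x : A × Proc A} (hx : x ∈ l) :
    acts x.2 ⊆ acts (nd l) := fun a ha => mem_acts_nd.2 (Or.inr ⟨x, hx, ha⟩)

theorem acts_child_pr {l : List (ℝ × Proc A)} {x : ℝ × Proc A} (hx : x ∈ l) :
    acts x.2 ⊆ acts (pr l) := fun a ha => mem_acts_pr.2 ⟨x, hx, ha⟩

theorem step_acts {s q : Proc A} {a : A} (h : step s a = some q) : acts q ⊆ acts s := by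
  cases s with
  | nd l =>
    obtain ⟨x, hx, -, rfl⟩ := step_some_mem h
    exact acts_child_nd hx
  | pr l => simp [step] at h

theorem step_none_of_not_mem {l : List (A × Proc A)} {a : A}
    (h : a ∉ (l.map Prod.fst).toFinset) : step (nd l) a = none := by
  simp only [step, Option.map_eq_none_iff]
  rw [List.find?_eq_none]
  intro x hx
  simp only [decide_eq_true_eq]
  rintro rfl
  exact h (by simp [List.mem_toFinset]; exact ⟨x.2, hx⟩)

theorem menu_nd (l : List (A × Proc A)) : menu (nd l) = (l.map Prod.fst).toFinset := rfl

theorem step_mem_menu {s q : Proc A} {a : A} (h : step s a = some q) : a ∈ menu s := by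
  cases s with
  | nd l =>
    obtain ⟨x, hx, hfst, -⟩ := step_some_mem h
    rw [menu_nd, List.mem_toFinset]
    exact List.mem_map.2 ⟨x, hx, hfst⟩
  | pr l => simp [step] at h

/-! ### after lemmas -/

theorem after_nd (l : List (A × Proc A)) (M : Finset A) (a : A) :
    after (nd l) M a = if (l.map Prod.fst).toFinset = M then step (nd l) a else none := by
  rw [after]

theorem after_pr (l : List (ℝ × Proc A)) (M : Finset A) (a : A) :
    after (pr l) M a =
      (if ((l.filter (fun x => x.2.menu = M)).flatMap (fun x =>
        match x.2.step a with
        | none => []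
        | some q => flat (x.1 / ((l.filter (fun x => x.2.menu = M)).map Prod.fst).sum) q)).isEmpty
      then none
      else some (pr ((l.filter (fun x => x.2.menu = M)).flatMap (fun x =>
        match x.2.step a with
        | none => []
        | some q => flat (x.1 / ((l.filter (fun x => x.2.menu = M)).map Prod.fst).sum) q)))) := by
  rw [after]

theorem after_isSome {s : Proc A} (hs : WF s) {M : Finset A} {a : A}
    (hM : M ∈ menus s) (ha : a ∈ M) : ∃ s', after s M a = some s' := by
  cases s with
  | nd l =>
    rw [menus_nd, Finset.mem_singleton] at hM
    obtain ⟨q, hq⟩ := step_isSome (show a ∈ (l.map Prod.fst).toFinset from hM ▸ ha)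
    exact ⟨q, by rw [after_nd, if_pos hM.symm, hq]⟩
  | pr l =>
    obtain ⟨x, hx, hMx⟩ := mem_menus_pr.1 hM
    have hwfx : WF x.2 := wf_child_pr hs hx
    obtain ⟨lx, hlx⟩ : ∃ lx, x.2 = nd lx := by
      cases hs with | pr _ hsh _ _ => exact (hsh x hx).2.2
    have hmenu : menu x.2 = M := by
      rw [hlx] at hMx ⊢
      rw [menus_nd, Finset.mem_singleton] at hMx
      rw [menu_nd, hMx]
    obtain ⟨q, hq⟩ : ∃ q, step x.2 a = some q := by
      rw [hlx]
      refine step_isSome ?_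
      rw [hlx] at hmenu
      rw [menu_nd] at hmenu
      rw [hmenu]; exact ha
    have hxsel : x ∈ l.filter (fun x => x.2.menu = M) :=
      List.mem_filter.2 ⟨hx, by simp [hmenu]⟩
    have hwq : WF q := wf_step hwfx hq
    set tot := ((l.filter (fun x => x.2.menu = M)).map Prod.fst).sum with htot
    obtain ⟨y, hy⟩ := List.exists_mem_of_ne_nil _ (flat_ne_nil hwq (x.1 / tot))
    have hmem : y ∈ (l.filter (fun x => x.2.menu = M)).flatMap (fun x =>
        match x.2.step a with
        | none => []
        | some q => flat (x.1 / tot) q) := by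
      refine List.mem_flatMap.2 ⟨x, hxsel, ?_⟩
      rw [hq]
      exact hy
    rw [after_pr]
    rw [if_neg (by
      simp only [List.isEmpty_iff]
      exact List.ne_nil_of_mem hmem)]
    exact ⟨_, rfl⟩

theorem after_none_of_not_mem {s : Proc A} {M : Finset A} {a : A} (ha : a ∉ M) :
    after s M a = none := by
  cases s with
  | nd l =>
    rw [after_nd]
    split
    · next h => exact step_none_of_not_mem (h ▸ ha)
    · rfl
  | pr l =>
    rw [after_pr]
    rw [if_pos]
    rw [List.isEmpty_iff]
    rw [List.flatMap_eq_nil_iff]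
    intro x hxsel
    have hmenu : menu x.2 = M := by
      have := (List.mem_filter.1 hxsel).2
      simpa using this
    have : step x.2 a = none := by
      cases hx2 : x.2 with
      | pr l2 => simp [step]
      | nd l2 =>
        refine step_none_of_not_mem ?_
        rw [hx2] at hmenu
        rw [menu_nd] at hmenu
        rw [hmenu]; exact ha
    rw [this]

theorem after_mem_menu {s s' : Proc A} {M : Finset A} {a : A}
    (h : after s M a = some s') : a ∈ M := by
  by_contra ha
  rw [after_none_of_not_mem ha] at h
  cases h

/-- Membership description for entries of `after` on a `pr` node. -/
theorem after_pr_some {l : List (ℝ × Proc A)} {M : Finset A} {a : A} {s' : Proc A}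
    (h : after (pr l) M a = some s') :
    s' = pr ((l.filter (fun x => x.2.menu = M)).flatMap (fun x =>
        match x.2.step a with
        | none => []
        | some q => flat (x.1 / ((l.filter (fun x => x.2.menu = M)).map Prod.fst).sum) q)) ∧
    ((l.filter (fun x => x.2.menu = M)).flatMap (fun x =>
        match x.2.step a with
        | none => []
        | some q => flat (x.1 / ((l.filter (fun x => x.2.menu = M)).map Prod.fst).sum) q)) ≠ [] := by
  rw [after_pr] at h
  split at h
  · cases h
  · next hne =>
    cases h
    exact ⟨rfl, by simpa [List.isEmpty_iff] using hne⟩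

end Proc
namespace Proc

variable {A : Type} [DecidableEq A]

def selL (l : List (ℝ × Proc A)) (M : Finset A) : List (ℝ × Proc A) :=
  l.filter (fun x => x.2.menu = M)

noncomputable def totR (l : List (ℝ × Proc A)) (M : Finset A) : ℝ :=
  ((selL l M).map Prod.fst).sum

noncomputable def entriesL (l : List (ℝ × Proc A)) (M : Finset A) (a : A) :
    List (ℝ × Proc A) :=
  (selL l M).flatMap (fun x =>
    match x.2.step a with
    | none => []
    | some q => flat (x.1 / totR l M) q)

theorem after_pr' (l : List (ℝ × Proc A)) (M : Finset A) (a : A) :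
    after (pr l) M a = if (entriesL l M a).isEmpty then none
      else some (pr (entriesL l M a)) := by
  rw [after]; rfl

theorem after_pr_some' {l : List (ℝ × Proc A)} {M : Finset A} {a : A} {s' : Proc A}
    (h : after (pr l) M a = some s') : s' = pr (entriesL l M a) ∧ entriesL l M a ≠ [] := by
  rw [after_pr'] at h
  split at h
  · cases h
  · next hne =>
    cases h
    exact ⟨rfl, by simpa [List.isEmpty_iff] using hne⟩

theorem mem_selL {l : List (ℝ × Proc A)} {M : Finset A} {x : ℝ × Proc A}
    (hx : x ∈ selL l M) : x ∈ l ∧ menu x.2 = M := by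
  refine ⟨(List.mem_filter.1 hx).1, ?_⟩
  have := (List.mem_filter.1 hx).2
  simpa using this

theorem selL_mem {l : List (ℝ × Proc A)} {M : Finset A} {x : ℝ × Proc A}
    (hx : x ∈ l) (hm : menu x.2 = M) : x ∈ selL l M :=
  List.mem_filter.2 ⟨hx, by simp [hm]⟩

theorem after_entry {l : List (ℝ × Proc A)} {M : Finset A} {a : A} {y : ℝ × Proc A}
    (hy : y ∈ entriesL l M a) :
    ∃ x, x ∈ selL l M ∧ ∃ q, step x.2 a = some q ∧ y ∈ flat (x.1 / totR l M) q := by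
  obtain ⟨x, hxs, hyx⟩ := List.mem_flatMap.1 hy
  refine ⟨x, hxs, ?_⟩
  cases hq : step x.2 a with
  | none => rw [hq] at hyx; simp at hyx
  | some q =>
    rw [hq] at hyx
    exact ⟨q, rfl, hyx⟩

theorem step_all_sel {l : List (ℝ × Proc A)} {M : Finset A} {a : A}
    (hs : WF (pr l)) (ha : a ∈ M) :
    ∀ x ∈ selL l M, ∃ q, step x.2 a = some q := by
  intro x hx
  obtain ⟨hxl, hm⟩ := mem_selL hx
  obtain ⟨lx, hlx⟩ : ∃ lx, x.2 = nd lx := by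
    cases hs with | pr _ hsh _ _ => exact (hsh x hxl).2.2
  rw [hlx]
  refine step_isSome ?_
  rw [hlx, menu_nd] at hm
  rw [hm]; exact ha

theorem totR_pos {l : List (ℝ × Proc A)} {M : Finset A} (hs : WF (pr l))
    (hne : ∃ x, x ∈ selL l M) : 0 < totR l M := by
  cases hs with
  | pr _ hsh _ _ =>
    obtain ⟨x0, hx0⟩ := hne
    exact listsum_pos _ Prod.fst (fun x hx => (hsh x (mem_selL hx).1).1.le) hx0
      (hsh x0 (mem_selL hx0).1).1

theorem after_wf {s s' : Proc A} (hs : WF s) {M : Finset A} {a : A}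
    (h : after s M a = some s') : WF s' := by
  cases s with
  | nd l =>
    rw [after_nd] at h
    split at h
    · exact wf_step hs h
    · cases h
  | pr l =>
    obtain ⟨rfl, hne⟩ := after_pr_some' h
    have ha : a ∈ M := after_mem_menu h
    have hselne : ∃ x, x ∈ selL l M := by
      obtain ⟨y, hy⟩ := List.exists_mem_of_ne_nil _ hne
      obtain ⟨x, hxs, -⟩ := after_entry hy
      exact ⟨x, hxs⟩
    have htot : 0 < totR l M := totR_pos hs hselne
    cases hs with
    | pr _ hsh hsum hch =>
      have hfst : ∀ x ∈ selL l M, 0 ≤ (Prod.fst x) :=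
        fun x hx => (hsh x (mem_selL hx).1).1.le
      have hyfact : ∀ y ∈ entriesL l M a, (0 < y.1 ∧ y.1 ≤ 1 ∧ ∃ l'', y.2 = nd l'') ∧ WF y.2 := by
        intro y hy
        obtain ⟨x, hxs, q, hq, hyf⟩ := after_entry hy
        obtain ⟨hxl, hm⟩ := mem_selL hxs
        have hwq : WF q := wf_step (hch x hxl) hq
        have hx1 : 0 < x.1 := (hsh x hxl).1
        have hle : x.1 ≤ totR l M := single_le_listsum _ Prod.fst hfst hxs
        have hwpos : 0 < x.1 / totR l M := div_pos hx1 htot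
        have hwle : x.1 / totR l M ≤ 1 := (div_le_one htot).2 hle
        cases q with
        | nd lq =>
          rw [flat_nd] at hyf
          simp only [List.mem_singleton] at hyf
          subst hyf
          exact ⟨⟨hwpos, hwle, lq, rfl⟩, hwq⟩
        | pr lq =>
          rw [flat_pr] at hyf
          obtain ⟨z, hz, rfl⟩ := List.mem_map.1 hyf
          cases hwq with
          | pr _ hsh' _ hch' =>
            obtain ⟨hz1, hz2, lz, hlz⟩ := hsh' z hz
            refine ⟨⟨mul_pos hwpos hz1, ?_, lz, hlz⟩, hch' z hz⟩
            calc x.1 / totR l M * z.1 ≤ 1 * 1 := by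
                  apply mul_le_mul hwle hz2 hz1.le; norm_num
              _ = 1 := by norm_num
      refine WF.pr _ (fun y hy => (hyfact y hy).1) ?_ (fun y hy => (hyfact y hy).2)
      rw [entriesL, listsum_flatMap]
      have : ∀ x ∈ selL l M,
          ((match x.2.step a with
            | none => []
            | some q => flat (x.1 / totR l M) q).map Prod.fst).sum = x.1 * (totR l M)⁻¹ := by
        intro x hx
        obtain ⟨q, hq⟩ := step_all_sel (WF.pr l hsh hsum hch) ha x hx
        rw [hq]
        rw [flat_fst_sum (wf_step (hch x (mem_selL hx).1) hq)]
        rw [div_eq_mul_inv]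
      rw [List.map_congr_left this, listsum_mul_right]
      exact mul_inv_cancel₀ htot.ne'

theorem after_noomega {ω : A} {s s' : Proc A} (hno : NoOmega ω s) {M : Finset A} {a : A}
    (h : after s M a = some s') : NoOmega ω s' := by
  cases s with
  | nd l =>
    rw [after_nd] at h
    split at h
    · exact noomega_step hno h
    · cases h
  | pr l =>
    obtain ⟨rfl, -⟩ := after_pr_some' h
    refine NoOmega.pr _ ?_
    intro y hy
    obtain ⟨x, hxs, q, hq, hyf⟩ := after_entry hy
    have hnq : NoOmega ω q := noomega_step (noomega_child_pr hno (mem_selL hxs).1) hq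
    cases q with
    | nd lq =>
      rw [flat_nd] at hyf
      simp only [List.mem_singleton] at hyf
      subst hyf
      exact hnq
    | pr lq =>
      rw [flat_pr] at hyf
      obtain ⟨z, hz, rfl⟩ := List.mem_map.1 hyf
      have h2 : NoOmega ω z.2 := noomega_child_pr hnq hz
      exact h2

theorem after_acts {s s' : Proc A} {M : Finset A} {a : A}
    (h : after s M a = some s') : acts s' ⊆ acts s := by
  cases s with
  | nd l =>
    rw [after_nd] at h
    split at h
    · exact step_acts h
    · cases h
  | pr l =>
    obtain ⟨rfl, -⟩ := after_pr_some' h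
    intro b hb
    obtain ⟨y, hy, hby⟩ := mem_acts_pr.1 hb
    obtain ⟨x, hxs, q, hq, hyf⟩ := after_entry hy
    have hsub : acts q ⊆ acts (pr l) :=
      (step_acts hq).trans (acts_child_pr (mem_selL hxs).1)
    cases q with
    | nd lq =>
      rw [flat_nd] at hyf
      simp only [List.mem_singleton] at hyf
      subst hyf
      exact hsub hby
    | pr lq =>
      rw [flat_pr] at hyf
      obtain ⟨z, hz, rfl⟩ := List.mem_map.1 hyf
      exact hsub (acts_child_pr hz hby)

theorem P1_pr_tot {l : List (ℝ × Proc A)} (hs : WF (pr l)) (M : Finset A) :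
    P1 (pr l) M = totR l M := by
  rw [P1_pr, totR, selL]
  have : ∀ x ∈ l, x.1 * P1 x.2 M = if (x.2.menu = M : Prop) then (Prod.fst x) else 0 := by
    intro x hx
    obtain ⟨lx, hlx⟩ : ∃ lx, x.2 = nd lx := by
      cases hs with | pr _ hsh _ _ => exact (hsh x hx).2.2
    rw [hlx]
    simp only [P1_nd, menu_nd]
    by_cases hcond : (lx.map Prod.fst).toFinset = M <;> simp [hcond]
  rw [List.map_congr_left this]
  rw [show (fun x : ℝ × Proc A => if (x.2.menu = M : Prop) then (Prod.fst x) else 0)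
      = (fun x : ℝ × Proc A => if (fun y : ℝ × Proc A => decide (y.2.menu = M)) x
          then (Prod.fst x) else 0) from by
    funext x; by_cases hc : x.2.menu = M <;> simp [hc]]
  rw [listsum_indicator]

theorem Pn_cons {s s' : Proc A} {M : Finset A} {a : A} (hpos : 0 < P1 s M)
    (h : after s M a = some s') (tr : List (Finset A × A)) (M' : Finset A) :
    Pn s ((M, a) :: tr) M' = Pn s' tr M' := by
  rw [Pn]
  rw [if_pos hpos, h]
  rfl

end Proc
namespace Proc

variable {A : Type} [DecidableEq A]

theorem listsum_indicator' {α M : Type*} [AddCommMonoid M] (l : List α) (p : α → Bool)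
    (f : α → M) :
    (l.map (fun x => if p x then f x else 0)).sum = ((l.filter p).map f).sum := by
  induction l with
  | nil => simp
  | cons a l ih =>
    by_cases h : p a <;> simp [List.filter_cons, h, ih]

theorem flat_res {ω : A} {q : Proc A} (hq : WF q) (w : ℝ) (T : Proc A) :
    ((flat w q).map (fun y => algebraMap ℝ (RF A) y.1 * resF ω y.2 T)).sum
      = algebraMap ℝ (RF A) w * resF ω q T := by
  cases q with
  | nd lq => simp [flat_nd]
  | pr lq =>
    rw [flat_pr, List.map_map, res_lin hq T, mul_listsum]
    refine congrArg List.sum (List.map_congr_left (fun z _ => ?_))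
    simp only [Function.comp_apply, map_mul]
    ring

theorem afterD_nd_menu {l : List (A × Proc A)} {M : Finset A}
    (h : (l.map Prod.fst).toFinset = M) (a : A) :
    afterD (nd l) M a = stepD (nd l) a := by
  rw [afterD, after_nd, if_pos h, stepD]

theorem res_after_pr {ω : A} {l : List (ℝ × Proc A)} {M : Finset A} {a : A}
    (hs : WF (pr l)) (hpos : 0 < P1 (pr l) M) (ha : a ∈ M) (T : Proc A) :
    algebraMap ℝ (RF A) (P1 (pr l) M) * resF ω (afterD (pr l) M a) T
      = ((selL l M).map (fun x =>
          algebraMap ℝ (RF A) x.1 * resF ω (stepD x.2 a) T)).sum := by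
  have hM : M ∈ menus (pr l) := (P1_pos_iff hs M).1 hpos
  obtain ⟨s', hs'⟩ := after_isSome hs hM ha
  obtain ⟨rfl, -⟩ := after_pr_some' hs'
  have haD : afterD (pr l) M a = pr (entriesL l M a) := by rw [afterD, hs']; rfl
  have htot : 0 < totR l M := by rw [← P1_pr_tot hs]; exact hpos
  rw [haD, res_lin (after_wf hs hs') T, entriesL, listsum_flatMap]
  have hper : ∀ x ∈ selL l M,
      ((match x.2.step a with
        | none => ([] : List (ℝ × Proc A))
        | some q => flat (x.1 / totR l M) q).map
          (fun y : ℝ × Proc A => algebraMap ℝ (RF A) y.1 * resF ω y.2 T)).sum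
      = algebraMap ℝ (RF A) (x.1 / totR l M) * resF ω (stepD x.2 a) T := by
    intro x hx
    obtain ⟨q, hq⟩ := step_all_sel hs ha x hx
    have hmatch : (match x.2.step a with
        | none => ([] : List (ℝ × Proc A))
        | some q => flat (x.1 / totR l M) q) = flat (x.1 / totR l M) q := by rw [hq]
    rw [hmatch, flat_res (wf_step (wf_child_pr hs (mem_selL hx).1) hq)]
    rw [show stepD x.2 a = q from by rw [stepD, hq]; rfl]
  rw [List.map_congr_left hper, mul_listsum]
  refine congrArg List.sum (List.map_congr_left (fun x hx => ?_))
  rw [← mul_assoc, ← map_mul, P1_pr_tot hs]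
  congr 2
  field_simp

theorem master {ω : A} : ∀ (n : ℕ) (s : Proc A), sizeOf s ≤ n → WF s →
    ∀ (l' : List (A × Proc A)), ω ∉ l'.map Prod.fst →
    ∀ (𝓜 : Finset (Finset A)), menus s ⊆ 𝓜 →
    resF ω s (nd l') = ∑ M ∈ 𝓜, algebraMap ℝ (RF A) (P1 s M) *
      ∑ a ∈ M ∩ (l'.map Prod.fst).toFinset,
        (RVar a / ∑ b ∈ M ∩ (l'.map Prod.fst).toFinset, RVar b) *
          resF ω (afterD s M a) (stepD (nd l') a) := by
  intro n
  induction n with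
  | zero => intro s h; cases s <;> simp at h
  | succ n ih =>
    intro s hsz hs l' hω' 𝓜 h𝓜
    cases s with
    | nd l =>
      rw [res_sync l l' hω']
      symm
      have hmem : (l.map Prod.fst).toFinset ∈ 𝓜 := h𝓜 (by rw [menus_nd]; simp)
      rw [Finset.sum_eq_single_of_mem _ hmem (fun M hM hne => by
        rw [P1_nd, if_neg (fun hc => hne hc.symm), map_zero, zero_mul])]
      rw [P1_nd, if_pos rfl, map_one, one_mul]
      refine Finset.sum_congr rfl (fun a ha => ?_)
      rw [afterD_nd_menu rfl]
    | pr l =>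
      rw [res_lin hs (nd l')]
      have hx2 : ∀ x ∈ l, ∃ lx, x.2 = nd lx := by
        cases hs with | pr _ hsh _ _ => exact fun x hx => (hsh x hx).2.2
      have hrw : ∀ x ∈ l, algebraMap ℝ (RF A) x.1 * resF ω x.2 (nd l')
          = ∑ M ∈ 𝓜, algebraMap ℝ (RF A) x.1 * (algebraMap ℝ (RF A) (P1 x.2 M) *
              ∑ a ∈ M ∩ (l'.map Prod.fst).toFinset,
                (RVar a / ∑ b ∈ M ∩ (l'.map Prod.fst).toFinset, RVar b) *
                  resF ω (afterD x.2 M a) (stepD (nd l') a)) := by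
        intro x hx
        have hszx := mem_sizeOf_pr hx
        rw [ih x.2 (by omega) (wf_child_pr hs hx) l' hω' 𝓜
          (fun M hM => h𝓜 (mem_menus_pr.2 ⟨x, hx, hM⟩))]
        rw [Finset.mul_sum]
      rw [List.map_congr_left hrw, listsum_finsetsum]
      refine Finset.sum_congr rfl (fun M hM => ?_)
      -- reduce the list sum to a sum over `selL l M`
      have hind : ∀ x ∈ l, algebraMap ℝ (RF A) x.1 * (algebraMap ℝ (RF A) (P1 x.2 M) *
            ∑ a ∈ M ∩ (l'.map Prod.fst).toFinset,
              (RVar a / ∑ b ∈ M ∩ (l'.map Prod.fst).toFinset, RVar b) *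
                resF ω (afterD x.2 M a) (stepD (nd l') a))
          = if (fun y : ℝ × Proc A => decide (y.2.menu = M)) x then
              (algebraMap ℝ (RF A) x.1 *
                ∑ a ∈ M ∩ (l'.map Prod.fst).toFinset,
                  (RVar a / ∑ b ∈ M ∩ (l'.map Prod.fst).toFinset, RVar b) *
                    resF ω (stepD x.2 a) (stepD (nd l') a)) else 0 := by
        intro x hx
        obtain ⟨lx, hlx⟩ := hx2 x hx
        by_cases hc : menu x.2 = M
        · rw [if_pos (by simp [hc])]
          have hP1 : P1 x.2 M = 1 := by
            rw [hlx, P1_nd, if_pos (by rw [hlx, menu_nd] at hc; exact hc)]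
          rw [hP1, map_one, one_mul]
          congr 1
          refine Finset.sum_congr rfl (fun a ha => ?_)
          rw [show afterD x.2 M a = stepD x.2 a from by
            rw [hlx]; exact afterD_nd_menu (by rw [hlx, menu_nd] at hc; exact hc) a]
        · rw [if_neg (by simp [hc])]
          have hP1 : P1 x.2 M = 0 := by
            rw [hlx, P1_nd, if_neg (by rw [hlx, menu_nd] at hc; exact hc)]
          rw [hP1, map_zero, zero_mul, mul_zero]
      rw [List.map_congr_left hind, listsum_indicator']
      rw [show List.filter (fun y : ℝ × Proc A => decide (y.2.menu = M)) l = selL l M from rfl]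
      by_cases hpos : 0 < P1 (pr l) M
      · -- positive case
        rw [Finset.mul_sum]
        have hswap := listsum_finsetsum (selL l M) (M ∩ (l'.map Prod.fst).toFinset)
          (fun x a => algebraMap ℝ (RF A) x.1 *
            ((RVar a / ∑ b ∈ M ∩ (l'.map Prod.fst).toFinset, RVar b) *
              resF ω (stepD x.2 a) (stepD (nd l') a)))
        rw [List.map_congr_left (g := fun x => ∑ a ∈ M ∩ (l'.map Prod.fst).toFinset,
              algebraMap ℝ (RF A) x.1 *
                ((RVar a / ∑ b ∈ M ∩ (l'.map Prod.fst).toFinset, RVar b) *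
                  resF ω (stepD x.2 a) (stepD (nd l') a)))
            (fun x _ => by rw [Finset.mul_sum])]
        rw [hswap]
        refine Finset.sum_congr rfl (fun a ha => ?_)
        have haM : a ∈ M := (Finset.mem_inter.1 ha).1
        have hre := res_after_pr (ω := ω) hs hpos haM (stepD (nd l') a)
        calc ((selL l M).map (fun x => algebraMap ℝ (RF A) x.1 *
                ((RVar a / ∑ b ∈ M ∩ (l'.map Prod.fst).toFinset, RVar b) *
                  resF ω (stepD x.2 a) (stepD (nd l') a)))).sum
            = (RVar a / ∑ b ∈ M ∩ (l'.map Prod.fst).toFinset, RVar b) *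
              ((selL l M).map (fun x => algebraMap ℝ (RF A) x.1 *
                resF ω (stepD x.2 a) (stepD (nd l') a))).sum := by
              rw [mul_listsum]
              exact congrArg List.sum (List.map_congr_left (fun x _ => by ring))
          _ = (RVar a / ∑ b ∈ M ∩ (l'.map Prod.fst).toFinset, RVar b) *
              (algebraMap ℝ (RF A) (P1 (pr l) M) *
                resF ω (afterD (pr l) M a) (stepD (nd l') a)) := by rw [hre]
          _ = algebraMap ℝ (RF A) (P1 (pr l) M) *
              ((RVar a / ∑ b ∈ M ∩ (l'.map Prod.fst).toFinset, RVar b) *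
                resF ω (afterD (pr l) M a) (stepD (nd l') a)) := by ring
      · -- zero case : `selL l M` is empty
        have hP0 : P1 (pr l) M = 0 := by
          have := P1_nonneg hs M
          linarith [lt_or_eq_of_le this]
        have hsel : selL l M = [] := by
          by_contra hne
          obtain ⟨x, hxmem⟩ := List.exists_mem_of_ne_nil _ hne
          have := totR_pos hs ⟨x, hxmem⟩
          rw [← P1_pr_tot hs] at this
          exact hpos this
        rw [hsel, hP0, map_zero, zero_mul]
        simp

end Proc
namespace Proc

variable {A : Type} [DecidableEq A]

theorem P1_eq_of_Pn {s t : Proc A} (h : ∀ tr M, Pn s tr M = Pn t tr M) (M : Finset A) :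
    P1 s M = P1 t M := by
  have := h [] M
  rw [Pn, Pn] at this
  exact Option.some.inj this

theorem rt_imp_res {ω : A} : ∀ (n : ℕ) (T : Proc A), sizeOf T ≤ n → WF T →
    ∀ s t : Proc A, WF s → WF t → (∀ tr M, Pn s tr M = Pn t tr M) →
    resF ω s T = resF ω t T := by
  intro n
  induction n with
  | zero => intro T h; cases T <;> simp at h
  | succ n ih =>
    intro T hszT hT s t hs ht hPn
    cases T with
    | nd l' =>
      by_cases hω : ω ∈ l'.map Prod.fst
      · rw [res_success s hω, res_success t hω]
      · rw [master (ω := ω) (sizeOf s) s le_rfl hs l' hω (menus s ∪ menus t)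
          Finset.subset_union_left]
        rw [master (ω := ω) (sizeOf t) t le_rfl ht l' hω (menus s ∪ menus t)
          Finset.subset_union_right]
        refine Finset.sum_congr rfl (fun M hM => ?_)
        have hP1 : P1 s M = P1 t M := P1_eq_of_Pn hPn M
        rw [hP1]
        by_cases hpos : 0 < P1 t M
        · congr 1
          refine Finset.sum_congr rfl (fun a ha => ?_)
          congr 1
          have haM : a ∈ M := (Finset.mem_inter.1 ha).1
          have haN : a ∈ (l'.map Prod.fst).toFinset := (Finset.mem_inter.1 ha).2
          obtain ⟨q, hq⟩ := step_isSome haN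
          have hszq := step_some_size hq
          have hstepD : stepD (nd l') a = q := by rw [stepD, hq]; rfl
          obtain ⟨s', hs'⟩ := after_isSome hs ((P1_pos_iff hs M).1 (hP1 ▸ hpos)) haM
          obtain ⟨t', ht'⟩ := after_isSome ht ((P1_pos_iff ht M).1 hpos) haM
          have hPn' : ∀ tr M0, Pn s' tr M0 = Pn t' tr M0 := by
            intro tr M0
            have h1 := hPn ((M, a) :: tr) M0
            rw [Pn_cons (hP1 ▸ hpos) hs' tr M0, Pn_cons hpos ht' tr M0] at h1
            exact h1
          have hDs : afterD s M a = s' := by rw [afterD, hs']; rfl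
          have hDt : afterD t M a = t' := by rw [afterD, ht']; rfl
          rw [hDs, hDt, hstepD]
          exact ih q (by omega) (wf_step hT hq) s' t' (after_wf hs hs') (after_wf ht ht') hPn'
        · have h0 : P1 t M = 0 := by
            have := P1_nonneg ht M
            rcases lt_or_eq_of_le this with h | h
            · exact absurd h hpos
            · exact h.symm
          rw [h0, map_zero, zero_mul, zero_mul]
    | pr l'' =>
      rw [res_prr hs l'', res_prr ht l'']
      refine congrArg List.sum (List.map_congr_left (fun y hy => ?_))
      have := mem_sizeOf_pr hy
      rw [ih y.2 (by omega) (wf_child_pr hT hy) s t hs ht hPn]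

theorem rt_to_te {ω : A} {s t : Proc A} (hs : WF s) (ht : WF t)
    (hrt : RTEquiv s t) : TestEquiv ω s t := by
  intro T hT r
  have heq : resF ω s T = resF ω t T :=
    rt_imp_res (sizeOf T) T le_rfl hT s t hs ht hrt
  constructor
  · intro h
    have h1 : resF ω t T = r := by rw [← heq, resF_eq h]
    exact h1 ▸ resF_spec ω t T
  · intro h
    have h1 : resF ω s T = r := by rw [heq, resF_eq h]
    exact h1 ▸ resF_spec ω s T

end Proc
namespace Proc

variable {A : Type} [DecidableEq A]

local notation "ψ" => algebraMap (MvPolynomial A ℝ) (RF A)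

/-! ### The real alternating sums `g` -/

noncomputable def gfun : ℕ → ℝ → ℝ
  | 0, x => 1 / x
  | d + 1, x => gfun d x - gfun d (x + 1)

theorem gfun_closed : ∀ (d : ℕ) (x : ℝ), 0 < x →
    gfun d x = (d.factorial : ℝ) / ∏ i ∈ Finset.range (d + 1), (x + i) := by
  intro d
  induction d with
  | zero => intro x hx; simp [gfun]
  | succ d ih =>
    intro x hx
    have hx1 : (0:ℝ) < x + 1 := by linarith
    have hprod : ∀ (y : ℝ), 0 < y → ∀ k, (0:ℝ) < ∏ i ∈ Finset.range k, (y + i) := by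
      intro y hy k
      refine Finset.prod_pos (fun i _ => ?_)
      have : (0:ℝ) ≤ i := Nat.cast_nonneg i
      linarith
    have hP1 : (0:ℝ) < ∏ i ∈ Finset.range (d + 1), (x + i) := hprod x hx _
    have hP2 : (0:ℝ) < ∏ i ∈ Finset.range (d + 1), (x + 1 + i) := hprod (x+1) hx1 _
    have hP3 : (0:ℝ) < ∏ i ∈ Finset.range (d + 2), (x + i) := hprod x hx _
    have e1 : ∏ i ∈ Finset.range (d + 2), (x + i)
        = (∏ i ∈ Finset.range (d + 1), (x + i)) * (x + ((d:ℝ) + 1)) := by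
      rw [Finset.prod_range_succ]; push_cast; ring
    have e2 : ∏ i ∈ Finset.range (d + 2), (x + i)
        = (∏ i ∈ Finset.range (d + 1), (x + 1 + i)) * x := by
      rw [Finset.prod_range_succ']
      congr 1
      · refine Finset.prod_congr rfl (fun i _ => ?_)
        push_cast; ring
      · norm_num
    have heq : (∏ i ∈ Finset.range (d + 1), (x + 1 + i)) * x
        = (∏ i ∈ Finset.range (d + 1), (x + i)) * (x + ((d:ℝ) + 1)) := by
      rw [← e2, e1]
    have hfact : ((d+1).factorial : ℝ) = (d.factorial : ℝ) * ((d:ℝ) + 1) := by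
      rw [Nat.factorial_succ]; push_cast; ring
    rw [gfun, ih x hx, ih (x + 1) hx1]
    rw [div_sub_div _ _ hP1.ne' hP2.ne']
    rw [div_eq_div_iff (mul_pos hP1 hP2).ne' (by positivity)]
    rw [hfact, e2]
    linear_combination ((d.factorial : ℝ) * ∏ i ∈ Finset.range (d + 1), (x + 1 + i)) * heq

theorem gfun_pos (d : ℕ) (x : ℝ) (hx : 0 < x) : 0 < gfun d x := by
  rw [gfun_closed d x hx]
  have hprod : (0:ℝ) < ∏ i ∈ Finset.range (d+1), (x + i) := by
    refine Finset.prod_pos (fun i _ => ?_)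
    have : (0:ℝ) ≤ i := Nat.cast_nonneg i
    linarith
  have : (0:ℝ) < d.factorial := by exact_mod_cast d.factorial_pos
  positivity

/-! ### Summing over powersets of an `insert` -/

theorem powerset_insert_sum {β : Type*} [AddCommMonoid β] {D : Finset A} {c : A}
    (hc : c ∉ D) (f : Finset A → β) :
    ∑ K ∈ (insert c D).powerset, f K
      = ∑ K ∈ D.powerset, f K + ∑ K ∈ D.powerset, f (insert c K) := by
  rw [Finset.powerset_insert, Finset.sum_union, Finset.sum_image]
  · intro K hK K' hK' h
    have hcK : c ∉ K := fun hmem => hc (Finset.mem_powerset.1 hK hmem)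
    have hcK' : c ∉ K' := fun hmem => hc (Finset.mem_powerset.1 hK' hmem)
    have := congrArg (Finset.erase · c) h
    simpa [Finset.erase_insert hcK, Finset.erase_insert hcK'] using this
  · rw [Finset.disjoint_left]
    intro K hK hK'
    obtain ⟨K', hK', rfl⟩ := Finset.mem_image.1 hK'
    exact hc (Finset.mem_powerset.1 hK (Finset.mem_insert_self c K'))

theorem powerset_sum_gfun (D : Finset A) : ∀ x : ℝ,
    ∑ K ∈ D.powerset, (-1 : ℝ) ^ K.card / (x + K.card) = gfun D.card x := by
  induction D using Finset.induction_on with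
  | empty => intro x; simp [gfun]
  | insert _ _ hc =>
    next c D ih =>
    intro x
    rw [powerset_insert_sum hc, Finset.card_insert_of_notMem hc, gfun, ← ih x, ← ih (x+1)]
    rw [sub_eq_add_neg]
    congr 1
    rw [← Finset.sum_neg_distrib]
    refine Finset.sum_congr rfl (fun K hK => ?_)
    have hcK : c ∉ K := fun hmem => hc (Finset.mem_powerset.1 hK hmem)
    rw [Finset.card_insert_of_notMem hcK, pow_succ]
    push_cast
    ring

/-! ### Linear polynomials attached to finite sets of actions -/

noncomputable def Spoly (M : Finset A) : MvPolynomial A ℝ := ∑ b ∈ M, MvPolynomial.X b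

theorem Svar_eq (M : Finset A) : (∑ b ∈ M, RVar b : RF A) = ψ (Spoly M) := by
  rw [Spoly, map_sum]
  rfl

theorem Spoly_eval_one (M : Finset A) :
    MvPolynomial.eval (fun _ : A => (1:ℝ)) (Spoly M) = M.card := by
  rw [Spoly, map_sum]
  simp

theorem Spoly_ne_zero {M : Finset A} (hM : M.Nonempty) : Spoly M ≠ 0 := by
  intro h
  have h1 := congrArg (MvPolynomial.eval (fun _ : A => (1:ℝ))) h
  rw [Spoly_eval_one, map_zero] at h1
  have h2 : 0 < M.card := Finset.card_pos.2 hM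
  have h3 : (0:ℝ) < M.card := by exact_mod_cast h2
  rw [h1] at h3
  exact lt_irrefl 0 h3

theorem psi_ne_zero {p : MvPolynomial A ℝ} (hp : p ≠ 0) : ψ p ≠ 0 := by
  intro h
  exact hp ((map_eq_zero_iff _ (IsFractionRing.injective (MvPolynomial A ℝ) (RF A))).1 h)

/-! ### The Γ sums and their nonvanishing -/

noncomputable def Gam (D J : Finset A) : RF A :=
  ∑ K ∈ D.powerset, (-1 : RF A) ^ K.card * (ψ (Spoly (J ∪ K)))⁻¹

theorem Gam_ne_zero {D J : Finset A} (hJ : J.Nonempty) (hdisj : ∀ b ∈ J, b ∉ D) :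
    Gam D J ≠ 0 := by
  classical
  have hSne : ∀ K : Finset A, K ∈ D.powerset → Spoly (J ∪ K) ≠ 0 :=
    fun K _ => Spoly_ne_zero (hJ.mono Finset.subset_union_left)
  have key : Gam D J * ψ (∏ K ∈ D.powerset, Spoly (J ∪ K))
      = ψ (∑ K ∈ D.powerset, (-1 : MvPolynomial A ℝ) ^ K.card *
          ∏ K' ∈ D.powerset.erase K, Spoly (J ∪ K')) := by
    rw [Gam, Finset.sum_mul, map_sum]
    refine Finset.sum_congr rfl (fun K hK => ?_)
    simp only [map_mul, map_pow, map_neg, map_one, map_prod]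
    rw [← Finset.prod_erase_mul D.powerset _ hK]
    have hne : ψ (Spoly (J ∪ K)) ≠ 0 := psi_ne_zero (hSne K hK)
    field_simp
  have hcardpos : (0:ℝ) < J.card := by
    exact_mod_cast Finset.card_pos.2 hJ
  have hcards : ∀ K : Finset A, (0:ℝ) < (J.card : ℝ) + K.card := by
    intro K
    have : (0:ℝ) ≤ K.card := Nat.cast_nonneg _
    linarith
  have hcardunion : ∀ K ∈ D.powerset, ((J ∪ K).card : ℝ) = (J.card : ℝ) + K.card := by
    intro K hK
    have hdisjK : Disjoint J K := by
      rw [Finset.disjoint_left]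
      intro b hb hbK
      exact hdisj b hb (Finset.mem_powerset.1 hK hbK)
    rw [Finset.card_union_of_disjoint hdisjK]
    push_cast; ring
  have hevalnum : MvPolynomial.eval (fun _ : A => (1:ℝ))
        (∑ K ∈ D.powerset, (-1 : MvPolynomial A ℝ) ^ K.card *
          ∏ K' ∈ D.powerset.erase K, Spoly (J ∪ K'))
      = (∏ K ∈ D.powerset, ((J.card : ℝ) + K.card)) * gfun D.card J.card := by
    rw [map_sum, ← powerset_sum_gfun D (J.card : ℝ), Finset.mul_sum]
    refine Finset.sum_congr rfl (fun K hK => ?_)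
    simp only [map_mul, map_pow, map_neg, map_one, map_prod]
    have hco : ∀ K' ∈ D.powerset.erase K,
        MvPolynomial.eval (fun _ : A => (1:ℝ)) (Spoly (J ∪ K'))
        = (J.card : ℝ) + K'.card := by
      intro K' hK'
      rw [Spoly_eval_one, hcardunion K' (Finset.mem_of_mem_erase hK')]
    rw [Finset.prod_congr rfl hco]
    rw [← Finset.prod_erase_mul D.powerset _ hK]
    have hKne : ((J.card : ℝ) + K.card) ≠ 0 := (hcards K).ne'
    field_simp
  have hnumne : (∑ K ∈ D.powerset, (-1 : MvPolynomial A ℝ) ^ K.card *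
      ∏ K' ∈ D.powerset.erase K, Spoly (J ∪ K')) ≠ 0 := by
    intro h0
    rw [h0, map_zero] at hevalnum
    have h1 : (0:ℝ) < ∏ K ∈ D.powerset, ((J.card : ℝ) + K.card) :=
      Finset.prod_pos (fun K _ => hcards K)
    have h2 := gfun_pos D.card (J.card : ℝ) hcardpos
    nlinarith
  intro hG
  rw [hG, zero_mul] at key
  exact psi_ne_zero hnumne key.symm

/-! ### The kernel identity -/

theorem kernel : ∀ (D : Finset A) (J W : Finset A),
    ∑ K ∈ D.powerset, (-1 : RF A) ^ K.card * (ψ (Spoly (J ∪ (W ∩ K))))⁻¹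
      = if D ⊆ W then Gam D J else 0 := by
  intro D
  induction D using Finset.induction_on with
  | empty =>
    intro J W
    rw [if_pos (Finset.empty_subset W)]
    simp [Gam]
  | insert _ _ hc =>
    next c D ih =>
    intro J W
    rw [powerset_insert_sum hc]
    by_cases hcW : c ∈ W
    · have hW : ∀ K : Finset A, K ⊆ D → W ∩ insert c K = insert c (W ∩ K) := by
        intro K hK
        ext b
        simp only [Finset.mem_inter, Finset.mem_insert]
        constructor
        · rintro ⟨hbW, rfl | hbK⟩
          · exact Or.inl rfl
          · exact Or.inr ⟨hbW, hbK⟩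
        · rintro (rfl | ⟨hbW, hbK⟩)
          · exact ⟨hcW, Or.inl rfl⟩
          · exact ⟨hbW, Or.inr hbK⟩
      have hsecond : ∑ K ∈ D.powerset, (-1 : RF A) ^ (insert c K).card *
            (ψ (Spoly (J ∪ (W ∩ insert c K))))⁻¹
          = - ∑ K ∈ D.powerset, (-1 : RF A) ^ K.card *
              (ψ (Spoly ((insert c J) ∪ (W ∩ K))))⁻¹ := by
        rw [← Finset.sum_neg_distrib]
        refine Finset.sum_congr rfl (fun K hK => ?_)
        have hcK : c ∉ K := fun hmem => hc (Finset.mem_powerset.1 hK hmem)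
        rw [Finset.card_insert_of_notMem hcK, hW K (Finset.mem_powerset.1 hK)]
        rw [show J ∪ insert c (W ∩ K) = insert c J ∪ (W ∩ K) from by
          ext b; simp only [Finset.mem_union, Finset.mem_insert, Finset.mem_inter]; tauto]
        rw [pow_succ]
        ring
      rw [hsecond, ih J W, ih (insert c J) W]
      have hiff : insert c D ⊆ W ↔ D ⊆ W := by
        constructor
        · exact fun h => (Finset.subset_insert c D).trans h
        · exact fun h => Finset.insert_subset hcW h
      by_cases hDW : D ⊆ W
      · rw [if_pos hDW, if_pos hDW, if_pos (hiff.2 hDW)]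
        have hGamIns : Gam (insert c D) J = Gam D J - Gam D (insert c J) := by
          rw [show Gam (insert c D) J = ∑ K ∈ (insert c D).powerset,
              (-1 : RF A) ^ K.card * (ψ (Spoly (J ∪ K)))⁻¹ from rfl]
          rw [powerset_insert_sum hc]
          have hstep : ∑ K ∈ D.powerset, (-1 : RF A) ^ (insert c K).card *
                (ψ (Spoly (J ∪ insert c K)))⁻¹
              = - ∑ K ∈ D.powerset, (-1 : RF A) ^ K.card *
                  (ψ (Spoly ((insert c J) ∪ K)))⁻¹ := by
            rw [← Finset.sum_neg_distrib]
            refine Finset.sum_congr rfl (fun K hK => ?_)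
            have hcK : c ∉ K := fun hmem => hc (Finset.mem_powerset.1 hK hmem)
            rw [Finset.card_insert_of_notMem hcK]
            rw [show J ∪ insert c K = insert c J ∪ K from by
              ext b; simp only [Finset.mem_union, Finset.mem_insert]; tauto]
            rw [pow_succ]
            ring
          rw [hstep]
          rw [show Gam D J = ∑ K ∈ D.powerset, (-1 : RF A) ^ K.card *
              (ψ (Spoly (J ∪ K)))⁻¹ from rfl]
          rw [show Gam D (insert c J) = ∑ K ∈ D.powerset, (-1 : RF A) ^ K.card *
              (ψ (Spoly (insert c J ∪ K)))⁻¹ from rfl]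
          ring
        rw [hGamIns]
        ring
      · rw [if_neg hDW, if_neg hDW, if_neg (fun h => hDW (hiff.1 h))]
        ring
    · have hW : ∀ K : Finset A, W ∩ insert c K = W ∩ K := by
        intro K
        ext b
        simp only [Finset.mem_inter, Finset.mem_insert]
        constructor
        · rintro ⟨hbW, rfl | hbK⟩
          · exact absurd hbW hcW
          · exact ⟨hbW, hbK⟩
        · rintro ⟨hbW, hbK⟩
          exact ⟨hbW, Or.inr hbK⟩
      have hsecond : ∑ K ∈ D.powerset, (-1 : RF A) ^ (insert c K).card *
            (ψ (Spoly (J ∪ (W ∩ insert c K))))⁻¹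
          = - ∑ K ∈ D.powerset, (-1 : RF A) ^ K.card *
              (ψ (Spoly (J ∪ (W ∩ K))))⁻¹ := by
        rw [← Finset.sum_neg_distrib]
        refine Finset.sum_congr rfl (fun K hK => ?_)
        have hcK : c ∉ K := fun hmem => hc (Finset.mem_powerset.1 hK hmem)
        rw [Finset.card_insert_of_notMem hcK, hW K, pow_succ]
        ring
      rw [hsecond, ih J W]
      rw [if_neg (show ¬ insert c D ⊆ W from
        fun h => hcW (h (Finset.mem_insert_self c D)))]
      ring

/-! ### The extraction lemma -/

theorem extraction (a : A) (V : Finset A) (haV : a ∉ V) (𝓜 : Finset (Finset A))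
    (h1 : ∀ M ∈ 𝓜, a ∈ M) (h2 : ∀ M ∈ 𝓜, M.erase a ⊆ V) (c : Finset A → RF A)
    (heq : ∀ K ⊆ V, ∑ M ∈ 𝓜, c M * (ψ (Spoly ({a} ∪ (M.erase a ∩ K))))⁻¹ = 0) :
    ∀ M ∈ 𝓜, c M = 0 := by
  classical
  have key : ∀ D ⊆ V, ∑ M ∈ 𝓜.filter (fun M => D ⊆ M), c M = 0 := by
    intro D hD
    have haD : a ∉ D := fun h => haV (hD h)
    have hcomb : ∑ K ∈ D.powerset, (-1 : RF A) ^ K.card *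
        (∑ M ∈ 𝓜, c M * (ψ (Spoly ({a} ∪ (M.erase a ∩ K))))⁻¹) = 0 := by
      rw [Finset.sum_congr rfl (fun K hK => by
        rw [heq K ((Finset.mem_powerset.1 hK).trans hD), mul_zero])]
      simp
    have hswap : ∑ K ∈ D.powerset, (-1 : RF A) ^ K.card *
          (∑ M ∈ 𝓜, c M * (ψ (Spoly ({a} ∪ (M.erase a ∩ K))))⁻¹)
        = ∑ M ∈ 𝓜, c M * (∑ K ∈ D.powerset, (-1 : RF A) ^ K.card *
            (ψ (Spoly ({a} ∪ (M.erase a ∩ K))))⁻¹) := by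
      calc ∑ K ∈ D.powerset, (-1 : RF A) ^ K.card *
            (∑ M ∈ 𝓜, c M * (ψ (Spoly ({a} ∪ (M.erase a ∩ K))))⁻¹)
          = ∑ K ∈ D.powerset, ∑ M ∈ 𝓜, (-1 : RF A) ^ K.card *
              (c M * (ψ (Spoly ({a} ∪ (M.erase a ∩ K))))⁻¹) :=
            Finset.sum_congr rfl (fun K _ => Finset.mul_sum _ _ _)
        _ = ∑ M ∈ 𝓜, ∑ K ∈ D.powerset, (-1 : RF A) ^ K.card *
              (c M * (ψ (Spoly ({a} ∪ (M.erase a ∩ K))))⁻¹) := Finset.sum_comm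
        _ = ∑ M ∈ 𝓜, c M * (∑ K ∈ D.powerset, (-1 : RF A) ^ K.card *
              (ψ (Spoly ({a} ∪ (M.erase a ∩ K))))⁻¹) := by
            refine Finset.sum_congr rfl (fun M _ => ?_)
            rw [Finset.mul_sum]
            exact Finset.sum_congr rfl (fun K _ => by ring)
    rw [hswap] at hcomb
    have hker : ∀ M ∈ 𝓜, c M * (∑ K ∈ D.powerset, (-1 : RF A) ^ K.card *
          (ψ (Spoly ({a} ∪ (M.erase a ∩ K))))⁻¹)
        = if D ⊆ M then c M * Gam D {a} else 0 := by
      intro M hM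
      rw [kernel D {a} (M.erase a)]
      have hiff : D ⊆ M.erase a ↔ D ⊆ M := by
        rw [Finset.subset_erase]
        exact ⟨fun h => h.1, fun h => ⟨h, haD⟩⟩
      by_cases hDM : D ⊆ M
      · rw [if_pos (hiff.2 hDM), if_pos hDM]
      · rw [if_neg (fun h => hDM (hiff.1 h)), if_neg hDM, mul_zero]
    rw [Finset.sum_congr rfl hker] at hcomb
    rw [← Finset.sum_filter] at hcomb
    rw [← Finset.sum_mul] at hcomb
    have hGam : Gam D {a} ≠ 0 :=
      Gam_ne_zero (Finset.singleton_nonempty a) (fun b hb => by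
        rw [Finset.mem_singleton] at hb
        subst hb
        exact haD)
    rcases mul_eq_zero.1 hcomb with h | h
    · exact h
    · exact absurd h hGam
  -- downward strong induction on the size of M
  suffices aux : ∀ (k : ℕ) (M : Finset A), M ∈ 𝓜 → V.card + 1 - (M.erase a).card ≤ k →
      c M = 0 by
    intro M hM
    exact aux (V.card + 1) M hM (by omega)
  intro k
  induction k with
  | zero =>
    intro M hM hk
    have hle : (M.erase a).card ≤ V.card := Finset.card_le_card (h2 M hM)
    omega
  | succ k ih =>
    intro M hM hk
    have hsum := key (M.erase a) (h2 M hM)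
    have hzero : ∀ M' ∈ 𝓜.filter (fun M' => M.erase a ⊆ M'), M' ≠ M → c M' = 0 := by
      intro M' hM' hne
      have hM'mem : M' ∈ 𝓜 := (Finset.mem_filter.1 hM').1
      have hsub : M.erase a ⊆ M' := (Finset.mem_filter.1 hM').2
      have hMsub : M ⊆ M' := by
        intro b hb
        by_cases hba : b = a
        · subst hba; exact h1 M' hM'mem
        · exact hsub (Finset.mem_erase.2 ⟨hba, hb⟩)
      have hssub : M.erase a ⊂ M'.erase a := by
        refine Finset.ssubset_iff_subset_ne.2 ⟨Finset.erase_subset_erase a hMsub, ?_⟩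
        intro hcontra
        apply hne
        have : insert a (M'.erase a) = insert a (M.erase a) := by rw [hcontra]
        rw [Finset.insert_erase (h1 M' hM'mem), Finset.insert_erase (h1 M hM)] at this
        exact this
      have hcard : (M.erase a).card < (M'.erase a).card := Finset.card_lt_card hssub
      exact ih M' hM'mem (by omega)
    have hMmem : M ∈ 𝓜.filter (fun M' => M.erase a ⊆ M') :=
      Finset.mem_filter.2 ⟨hM, Finset.erase_subset a M⟩
    rw [Finset.sum_eq_single_of_mem M hMmem (fun M' hM' hne => hzero M' hM' hne)] at hsum
    exact hsum

end Proc
namespace Proc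

variable {A : Type} [DecidableEq A]

/-! ### The distinguishing tests -/

noncomputable def testT (K : Finset A) (a : A) (T' : Proc A) : Proc A :=
  nd (K.toList.map (fun b => (b, nd [])) ++ [(a, T')])

theorem testT_names (K : Finset A) (a : A) (T' : Proc A) :
    (K.toList.map (fun b => (b, (nd [] : Proc A))) ++ [(a, T')]).map Prod.fst
      = K.toList ++ [a] := by
  simp [Function.comp_def]

theorem testT_menu (K : Finset A) (a : A) (T' : Proc A) :
    ((K.toList.map (fun b => (b, (nd [] : Proc A))) ++ [(a, T')]).map Prod.fst).toFinset
      = insert a K := by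
  rw [testT_names, List.toFinset_append]
  ext b
  simp [or_comm]

theorem testT_wf {K : Finset A} {a : A} {T' : Proc A} (haK : a ∉ K) (hT' : WF T') :
    WF (testT K a T') := by
  refine WF.nd _ ?_ ?_
  · rw [testT_names]
    refine List.Nodup.append K.nodup_toList (List.nodup_singleton a) ?_
    intro b hb hba
    rw [List.mem_singleton] at hba
    subst hba
    exact haK (Finset.mem_toList.1 hb)
  · intro x hx
    rcases List.mem_append.1 hx with h | h
    · obtain ⟨b, -, rfl⟩ := List.mem_map.1 h
      exact WF.nd [] (by simp) (by simp)
    · rw [List.mem_singleton] at h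
      subst h
      exact hT'

theorem testT_omega {ω : A} {K : Finset A} {a : A} (T' : Proc A)
    (hωK : ω ∉ K) (hωa : ω ≠ a) :
    ω ∉ (K.toList.map (fun b => (b, (nd [] : Proc A))) ++ [(a, T')]).map Prod.fst := by
  rw [testT_names]
  intro h
  rcases List.mem_append.1 h with h | h
  · exact hωK (Finset.mem_toList.1 h)
  · rw [List.mem_singleton] at h
    exact hωa h

theorem step_append_last {l : List (A × Proc A)} {a : A} {T' : Proc A}
    (h : ∀ x ∈ l, x.1 ≠ a) : step (nd (l ++ [(a, T')])) a = some T' := by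
  induction l with
  | nil => simp [step]
  | cons x l ih =>
    have hx' : (decide (x.1 = a)) = false := by
      simpa using h x (by simp)
    simp only [step, List.cons_append] at ih ⊢
    rw [List.find?_cons, hx']
    simp only [Bool.false_eq_true, if_false]
    exact ih (fun y hy => h y (by simp [hy]))

theorem testT_step_a {K : Finset A} {a : A} (T' : Proc A) (haK : a ∉ K) :
    stepD (testT K a T') a = T' := by
  rw [stepD, testT, step_append_last (fun x hx => ?_)]
  · rfl
  · obtain ⟨b, hb, rfl⟩ := List.mem_map.1 hx
    intro hba
    exact haK (by rw [← hba]; exact Finset.mem_toList.1 hb)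

theorem testT_step_b {K : Finset A} {a b : A} (T' : Proc A) (hba : b ≠ a) :
    stepD (testT K a T') b = nd [] := by
  rw [stepD, testT]
  cases hfind : (K.toList.map (fun c => (c, (nd [] : Proc A))) ++ [(a, T')]).find?
      (fun x => x.1 = b) with
  | none => simp [step, hfind]
  | some x =>
    have hxmem := List.mem_of_find?_eq_some hfind
    have hxpred := List.find?_some hfind
    have hx1 : x.1 = b := by simpa using hxpred
    have hx2 : x.2 = nd [] := by
      rcases List.mem_append.1 hxmem with h | h
      · obtain ⟨c, -, rfl⟩ := List.mem_map.1 h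
        rfl
      · rw [List.mem_singleton] at h
        subst h
        exact absurd hx1 (by simpa using hba.symm)
    simp [step, hfind, hx2]

theorem res_testT {ω : A} {s : Proc A} (hs : WF s) {K : Finset A} {a : A} (T' : Proc A)
    (haK : a ∉ K) (hωK : ω ∉ K) (hωa : ω ≠ a) {𝓜 : Finset (Finset A)}
    (h𝓜 : menus s ⊆ 𝓜) :
    resF ω s (testT K a T') = ∑ M ∈ 𝓜, algebraMap ℝ (RF A) (P1 s M) *
      (if a ∈ M then
        (RVar a / ∑ b ∈ M ∩ insert a K, RVar b) * resF ω (afterD s M a) T'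
      else 0) := by
  rw [testT, master (ω := ω) (sizeOf s) s le_rfl hs _ (testT_omega T' hωK hωa) 𝓜 h𝓜]
  refine Finset.sum_congr rfl (fun M hM => ?_)
  congr 1
  rw [testT_menu]
  by_cases haM : a ∈ M
  · rw [if_pos haM]
    rw [Finset.sum_eq_single_of_mem a (Finset.mem_inter.2 ⟨haM, Finset.mem_insert_self a K⟩)
      (fun b hb hbne => ?_)]
    · rw [show stepD (nd (K.toList.map (fun b => (b, (nd [] : Proc A))) ++ [(a, T')])) a = T'
        from testT_step_a T' haK]
    · rw [show stepD (nd (K.toList.map (fun c => (c, (nd [] : Proc A))) ++ [(a, T')])) b = nd []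
        from testT_step_b T' hbne]
      rw [res_nil, mul_zero]
  · rw [if_neg haM]
    refine Finset.sum_eq_zero (fun b hb => ?_)
    have hbM := (Finset.mem_inter.1 hb).1
    have hbne : b ≠ a := fun h => haM (h ▸ hbM)
    rw [show stepD (nd (K.toList.map (fun c => (c, (nd [] : Proc A))) ++ [(a, T')])) b = nd []
      from testT_step_b T' hbne]
    rw [res_nil, mul_zero]

end Proc
namespace Proc

variable {A : Type} [DecidableEq A]

local notation "ψ" => algebraMap (MvPolynomial A ℝ) (RF A)
local notation "φ" => algebraMap ℝ (RF A)

theorem RVar_ne_zero (a : A) : (RVar a : RF A) ≠ 0 :=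
  psi_ne_zero (MvPolynomial.X_ne_zero a)

theorem phiR_injective : Function.Injective (φ : ℝ →+* RF A) :=
  RingHom.injective _

theorem key_extract {ω : A} {s t : Proc A} (hs : WF s) (ht : WF t)
    (hsω : NoOmega ω s) (htω : NoOmega ω t)
    (hres : ∀ T, WF T → resF ω s T = resF ω t T) (a : A) (hωa : ω ≠ a)
    {T' : Proc A} (hT' : WF T') :
    ∀ M ∈ (menus s ∪ menus t).filter (fun M => a ∈ M),
      (φ (P1 s M) * resF ω (afterD s M a) T'
        - φ (P1 t M) * resF ω (afterD t M a) T') * RVar a = 0 := by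
  classical
  have hωU : ω ∉ acts s ∪ acts t := by
    rw [Finset.mem_union]
    rintro (h | h)
    · exact noOmega_acts s hsω h
    · exact noOmega_acts t htω h
  have hsubU : ∀ M ∈ menus s ∪ menus t, M ⊆ acts s ∪ acts t := by
    intro M hM
    rcases Finset.mem_union.1 hM with h | h
    · exact (menu_subset_acts s M h).trans Finset.subset_union_left
    · exact (menu_subset_acts t M h).trans Finset.subset_union_right
  refine extraction a ((acts s ∪ acts t).erase a) (Finset.notMem_erase a _)
    ((menus s ∪ menus t).filter (fun M => a ∈ M))
    (fun M hM => (Finset.mem_filter.1 hM).2)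
    (fun M hM => Finset.erase_subset_erase a (hsubU M (Finset.mem_filter.1 hM).1))
    _ ?_
  intro K hKV
  have haK : a ∉ K := fun h => Finset.notMem_erase a _ (hKV h)
  have hωK : ω ∉ K := fun h => hωU (Finset.mem_of_mem_erase (hKV h))
  have h := hres (testT K a T') (testT_wf haK hT')
  rw [res_testT hs T' haK hωK hωa (𝓜 := menus s ∪ menus t) Finset.subset_union_left,
    res_testT ht T' haK hωK hωa (𝓜 := menus s ∪ menus t) Finset.subset_union_right] at h
  simp only [mul_ite, mul_zero] at h
  rw [← Finset.sum_filter, ← Finset.sum_filter] at h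
  have hsub : ∑ M ∈ (menus s ∪ menus t).filter (fun M => a ∈ M),
      (φ (P1 s M) * ((RVar a / ∑ b ∈ M ∩ insert a K, RVar b) * resF ω (afterD s M a) T')
        - φ (P1 t M) * ((RVar a / ∑ b ∈ M ∩ insert a K, RVar b) * resF ω (afterD t M a) T'))
      = 0 := by
    rw [Finset.sum_sub_distrib, h, sub_self]
  calc ∑ M ∈ (menus s ∪ menus t).filter (fun M => a ∈ M),
        (φ (P1 s M) * resF ω (afterD s M a) T'
          - φ (P1 t M) * resF ω (afterD t M a) T') * RVar a *
          (ψ (Spoly ({a} ∪ (M.erase a ∩ K))))⁻¹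
      = ∑ M ∈ (menus s ∪ menus t).filter (fun M => a ∈ M),
        (φ (P1 s M) * ((RVar a / ∑ b ∈ M ∩ insert a K, RVar b) * resF ω (afterD s M a) T')
          - φ (P1 t M) * ((RVar a / ∑ b ∈ M ∩ insert a K, RVar b)
              * resF ω (afterD t M a) T')) := by
        refine Finset.sum_congr rfl (fun M hM => ?_)
        have haM : a ∈ M := (Finset.mem_filter.1 hM).2
        have hset : M ∩ insert a K = {a} ∪ (M.erase a ∩ K) := by
          ext b
          simp only [Finset.mem_inter, Finset.mem_insert, Finset.mem_union,
            Finset.mem_singleton, Finset.mem_erase]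
          constructor
          · rintro ⟨hbM, rfl | hbK⟩
            · exact Or.inl rfl
            · by_cases hba : b = a
              · exact Or.inl hba
              · exact Or.inr ⟨⟨hba, hbM⟩, hbK⟩
          · rintro (rfl | ⟨⟨hba, hbM⟩, hbK⟩)
            · exact ⟨haM, Or.inl rfl⟩
            · exact ⟨hbM, Or.inr hbK⟩
        rw [hset, Svar_eq, div_eq_mul_inv]
        ring
    _ = 0 := hsub

theorem P1_eq_of_res {ω : A} {s t : Proc A} (hs : WF s) (ht : WF t)
    (hsω : NoOmega ω s) (htω : NoOmega ω t)
    (hres : ∀ T, WF T → resF ω s T = resF ω t T) : ∀ M, P1 s M = P1 t M := by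
  have hne : ∀ M : Finset A, M.Nonempty → M ∈ menus s ∪ menus t → P1 s M = P1 t M := by
    rintro M ⟨a, haM⟩ hM
    have haU : a ∈ acts s ∪ acts t := by
      rcases Finset.mem_union.1 hM with h | h
      · exact Finset.mem_union_left _ (menu_subset_acts s M h haM)
      · exact Finset.mem_union_right _ (menu_subset_acts t M h haM)
    have hωa : ω ≠ a := by
      rintro rfl
      rw [Finset.mem_union] at haU
      rcases haU with h | h
      · exact noOmega_acts s hsω h
      · exact noOmega_acts t htω h
    have hwfsucc : WF (nd [(ω, (nd [] : Proc A))]) := by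
      refine WF.nd _ (by simp) ?_
      intro x hx
      rw [List.mem_singleton] at hx
      subst hx
      exact WF.nd [] (by simp) (by simp)
    have hkey := key_extract hs ht hsω htω hres a hωa hwfsucc M
      (Finset.mem_filter.2 ⟨hM, haM⟩)
    rw [res_success _ (by simp), res_success _ (by simp), mul_one, mul_one] at hkey
    rcases mul_eq_zero.1 hkey with h | h
    · exact phiR_injective (sub_eq_zero.1 h)
    · exact absurd h (RVar_ne_zero a)
  intro M
  by_cases hM : M ∈ menus s ∪ menus t
  · rcases M.eq_empty_or_nonempty with rfl | hMne
    · have h1 := P1_sum_one hs (𝓝 := menus s ∪ menus t) Finset.subset_union_left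
      have h2 := P1_sum_one ht (𝓝 := menus s ∪ menus t) Finset.subset_union_right
      rw [← Finset.add_sum_erase _ _ hM] at h1 h2
      have h3 : ∑ M' ∈ (menus s ∪ menus t).erase ∅, P1 s M'
          = ∑ M' ∈ (menus s ∪ menus t).erase ∅, P1 t M' := by
        refine Finset.sum_congr rfl (fun M' hM' => ?_)
        refine hne M' ?_ (Finset.mem_of_mem_erase hM')
        rw [Finset.nonempty_iff_ne_empty]
        exact (Finset.mem_erase.1 hM').1
      linarith
    · exact hne M hMne hM
  · rw [P1_eq_zero hs (fun h => hM (Finset.mem_union_left _ h)),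
      P1_eq_zero ht (fun h => hM (Finset.mem_union_right _ h))]

theorem res_after_eq {ω : A} {s t : Proc A} (hs : WF s) (ht : WF t)
    (hsω : NoOmega ω s) (htω : NoOmega ω t)
    (hres : ∀ T, WF T → resF ω s T = resF ω t T) {M : Finset A} {a : A}
    (hpos : 0 < P1 s M) (haM : a ∈ M) :
    ∀ T', WF T' → resF ω (afterD s M a) T' = resF ω (afterD t M a) T' := by
  intro T' hT'
  have hMmem : M ∈ menus s := (P1_pos_iff hs M).1 hpos
  have haU : a ∈ acts s ∪ acts t :=
    Finset.mem_union_left _ (menu_subset_acts s M hMmem haM)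
  have hωa : ω ≠ a := by
    rintro rfl
    rcases Finset.mem_union.1 haU with h | h
    · exact noOmega_acts s hsω h
    · exact noOmega_acts t htω h
  have hkey := key_extract hs ht hsω htω hres a hωa hT' M
    (Finset.mem_filter.2 ⟨Finset.mem_union_left _ hMmem, haM⟩)
  have hP1 : P1 t M = P1 s M := (P1_eq_of_res hs ht hsω htω hres M).symm
  rw [hP1, ← mul_sub] at hkey
  rcases mul_eq_zero.1 hkey with h | h
  · rcases mul_eq_zero.1 h with h' | h'
    · exfalso
      have h0 : P1 s M = 0 := phiR_injective (by rw [h', map_zero])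
      linarith
    · exact sub_eq_zero.1 h'
  · exact absurd h (RVar_ne_zero a)

theorem res_to_Pn {ω : A} : ∀ (tr : List (Finset A × A)) (s t : Proc A), WF s → WF t →
    NoOmega ω s → NoOmega ω t → (∀ T, WF T → resF ω s T = resF ω t T) →
    ∀ M, Pn s tr M = Pn t tr M := by
  intro tr
  induction tr with
  | nil =>
    intro s t hs ht hsω htω hres M
    rw [Pn, Pn, P1_eq_of_res hs ht hsω htω hres M]
  | cons Ma tr ih =>
    intro s t hs ht hsω htω hres M
    obtain ⟨M0, a⟩ := Ma
    have hP1 := P1_eq_of_res hs ht hsω htω hres M0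
    by_cases hpos : 0 < P1 s M0
    · by_cases haM : a ∈ M0
      · obtain ⟨s', hs'⟩ := after_isSome hs ((P1_pos_iff hs M0).1 hpos) haM
        obtain ⟨t', ht'⟩ := after_isSome ht ((P1_pos_iff ht M0).1 (hP1 ▸ hpos)) haM
        rw [Pn_cons hpos hs' tr M, Pn_cons (hP1 ▸ hpos) ht' tr M]
        have hDs : afterD s M0 a = s' := by rw [afterD, hs']; rfl
        have hDt : afterD t M0 a = t' := by rw [afterD, ht']; rfl
        refine ih s' t' (after_wf hs hs') (after_wf ht ht')
          (after_noomega hsω hs') (after_noomega htω ht') (fun T hT => ?_) M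
        rw [← hDs, ← hDt]
        exact res_after_eq hs ht hsω htω hres hpos haM T hT
      · rw [Pn, Pn, if_pos hpos, if_pos (hP1 ▸ hpos),
          after_none_of_not_mem haM, after_none_of_not_mem haM]
    · rw [Pn, Pn, if_neg hpos, if_neg (by rw [← hP1]; exact hpos)]

end Proc
/-- Two processes are testing equivalent if and only if they are
probabilistically ready trace equivalent: `s ≈_T t ↔ s ≈_O t`. -/
theorem testEquiv_iff_rtEquiv {A : Type} [DecidableEq A] (ω : A)
    (s t : Proc A) (hs : Proc.WF s) (ht : Proc.WF t)
    (hsω : Proc.NoOmega ω s) (htω : Proc.NoOmega ω t) :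
    Proc.TestEquiv ω s t ↔ Proc.RTEquiv s t := by
  constructor
  · intro hTE
    have hres : ∀ T, Proc.WF T → Proc.resF ω s T = Proc.resF ω t T := by
      intro T hT
      have h1 := Proc.resF_spec ω s T
      have h2 := (hTE T hT _).1 h1
      exact (Proc.resF_eq h2).symm
    exact fun tr M => Proc.res_to_Pn tr s t hs ht hsω htω hres M
  · intro hRT
    exact Proc.rt_to_te hs ht hRT
end

section
/- Two processes s and t are not testing equivalent if and only if there exists a test T without probabilistic transitions such that Res(s,T) ≠ Res(t,T); i.e., probabilistic transitions add no distinguishing power to tests. -/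
set_option linter.unusedSectionVars false
namespace ProofAux

open Proc

variable {A : Type} [DecidableEq A]

theorem sizeOf_snd_lt_nd {l : List (A × Proc A)} {x : A × Proc A} (h : x ∈ l) :
    sizeOf x.2 < sizeOf (Proc.nd l) := by
  have h' := List.sizeOf_lt_of_mem h
  obtain ⟨a, p⟩ := x
  simp at h' ⊢
  omega

theorem sizeOf_snd_lt_pr {l : List (ℝ × Proc A)} {x : ℝ × Proc A} (h : x ∈ l) :
    sizeOf x.2 < sizeOf (Proc.pr l) := by
  have h' := List.sizeOf_lt_of_mem h
  obtain ⟨a, p⟩ := x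
  simp at h' ⊢
  omega

theorem step_mem {l : List (A × Proc A)} {a : A} {q : Proc A}
    (h : Proc.step (Proc.nd l) a = some q) : ∃ x ∈ l, x.2 = q := by
  simp only [Proc.step, Option.map_eq_some_iff] at h
  obtain ⟨x, hx, rfl⟩ := h
  exact ⟨x, List.mem_of_find?_eq_some hx, rfl⟩

theorem step_isSome {l : List (A × Proc A)} {a : A} (h : a ∈ l.map Prod.fst) :
    ∃ q, Proc.step (Proc.nd l) a = some q := by
  obtain ⟨x, hx, hx1⟩ := List.mem_map.mp h
  cases hfind : l.find? (fun y => y.1 = a) with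
  | none =>
      exact absurd (by simp [hx1] : (fun y : A × Proc A => decide (y.1 = a)) x = true)
        (by simpa using List.find?_eq_none.mp hfind x hx)
  | some y => exact ⟨y.2, by simp [Proc.step, hfind]⟩

end ProofAux
namespace ProofAux
variable {A : Type} [DecidableEq A]
set_option maxHeartbeats 1000000 in
theorem resrel_total (ω : A) : ∀ (n : ℕ) (s T : Proc A), sizeOf s + sizeOf T ≤ n →
    ∃ r, Proc.ResRel ω s T r := by
  intro n
  induction n with
  | zero =>
      intro s T h
      exfalso
      have : 0 < sizeOf s := by cases s <;> simp <;> omega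
      omega
  | succ n ih =>
    intro s T hn
    match T with
    | .nd l' =>
      by_cases hω : ω ∈ l'.map Prod.fst
      · exact ⟨1, .success s l' hω⟩
      · match s with
        | .nd l =>
          have H : ∀ a : A, ∃ ra : RF A, ∀ sa Ta, Proc.step (Proc.nd l) a = some sa →
              Proc.step (Proc.nd l') a = some Ta → Proc.ResRel ω sa Ta ra := by
            intro a
            cases h1 : Proc.step (Proc.nd l) a with
            | none => exact ⟨0, fun sa Ta hsa _ => by cases hsa⟩
            | some sa =>
              cases h2 : Proc.step (Proc.nd l') a with
              | none => exact ⟨0, fun sa' Ta _ hTa => by cases hTa⟩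
              | some Ta =>
                obtain ⟨x, hx, rfl⟩ := ProofAux.step_mem h1
                obtain ⟨y, hy, rfl⟩ := ProofAux.step_mem h2
                have hs1 := ProofAux.sizeOf_snd_lt_nd hx
                have hs2 := ProofAux.sizeOf_snd_lt_nd hy
                obtain ⟨r, hr⟩ := ih x.2 y.2 (by omega)
                refine ⟨r, fun sa' Ta' hsa' hTa' => ?_⟩
                
                cases hsa'; cases hTa'; exact hr
          choose r hr using H
          exact ⟨_, .sync l l' r hω (fun a _ => hr a)⟩
        | .pr l =>
          have H : ∀ x : ℝ × Proc A, ∃ rx : RF A, x ∈ l → Proc.ResRel ω x.2 (Proc.nd l') rx := by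
            intro x
            by_cases hx : x ∈ l
            · have := ProofAux.sizeOf_snd_lt_pr hx
              obtain ⟨r, hr⟩ := ih x.2 (Proc.nd l') (by omega)
              exact ⟨r, fun _ => hr⟩
            · exact ⟨0, fun h => absurd h hx⟩
          choose r hr using H
          exact ⟨_, .probL l _ r (by simpa [Proc.hasOmega] using hω) (fun x hx => hr x hx)⟩
    | .pr l' =>
      match s with
      | .nd l =>
        have H : ∀ x : ℝ × Proc A, ∃ rx : RF A, x ∈ l' → Proc.ResRel ω (Proc.nd l) x.2 rx := by
          intro x
          by_cases hx : x ∈ l'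
          · have := ProofAux.sizeOf_snd_lt_pr hx
            obtain ⟨r, hr⟩ := ih (Proc.nd l) x.2 (by omega)
            exact ⟨r, fun _ => hr⟩
          · exact ⟨0, fun h => absurd h hx⟩
        choose r hr using H
        exact ⟨_, .probR l l' r (fun x hx => hr x hx)⟩
      | .pr l =>
        have H : ∀ x : ℝ × Proc A, ∃ rx : RF A, x ∈ l → Proc.ResRel ω x.2 (Proc.pr l') rx := by
          intro x
          by_cases hx : x ∈ l
          · have := ProofAux.sizeOf_snd_lt_pr hx
            obtain ⟨r, hr⟩ := ih x.2 (Proc.pr l') (by omega)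
            exact ⟨r, fun _ => hr⟩
          · exact ⟨0, fun h => absurd h hx⟩
        choose r hr using H
        exact ⟨_, .probL l _ r (by simp [Proc.hasOmega]) (fun x hx => hr x hx)⟩
end ProofAux
namespace ProofAux
variable {A : Type} [DecidableEq A]
theorem resrel_det (ω : A) {s T : Proc A} {r1 r2 : RF A}
    (h1 : Proc.ResRel ω s T r1) (h2 : Proc.ResRel ω s T r2) : r1 = r2 := by
  induction h1 generalizing r2 with
  | success s l h =>
    cases h2 with
    | success => rfl
    | probL l0 T r hT h' => exact absurd h hT
    | sync l0 l' r hω h' => exact absurd h hω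
  | probL l T r hT h ih =>
    cases h2 with
    | success _ l'' h'' => exact absurd h'' hT
    | probL _ _ r' hT' h' =>
      exact congrArg List.sum (List.map_congr_left (fun x hx => by
        rw [ih x hx (h' x hx)]))
  | probR l l' r h ih =>
    cases h2 with
    | probR _ _ r' h' =>
      exact congrArg List.sum (List.map_congr_left (fun x hx => by
        rw [ih x hx (h' x hx)]))
  | sync l l' r hω h ih =>
    cases h2 with
    | success _ _ h'' => exact absurd h'' hω
    | sync _ _ r' hω' h' =>
      refine Finset.sum_congr rfl (fun a ha => ?_)
      have ha1 : a ∈ l.map Prod.fst := List.mem_toFinset.mp (Finset.mem_inter.mp ha).1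
      have ha2 : a ∈ l'.map Prod.fst := List.mem_toFinset.mp (Finset.mem_inter.mp ha).2
      obtain ⟨sa, hsa⟩ := ProofAux.step_isSome ha1
      obtain ⟨Ta, hTa⟩ := ProofAux.step_isSome ha2
      rw [ih a ha sa Ta hsa hTa (h' a ha sa Ta hsa hTa)]
end ProofAux
namespace ProofAux
variable {A : Type} [DecidableEq A]
noncomputable def Res (ω : A) (s T : Proc A) : RF A :=
  (resrel_total ω (sizeOf s + sizeOf T) s T le_rfl).choose

theorem res_spec (ω : A) (s T : Proc A) : Proc.ResRel ω s T (Res ω s T) :=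
  (resrel_total ω (sizeOf s + sizeOf T) s T le_rfl).choose_spec

theorem res_eq (ω : A) {s T : Proc A} {r : RF A} (h : Proc.ResRel ω s T r) :
    Res ω s T = r :=
  resrel_det ω (res_spec ω s T) h

theorem res_success (ω : A) {l' : List (A × Proc A)} (h : ω ∈ l'.map Prod.fst)
    (s : Proc A) : Res ω s (Proc.nd l') = 1 :=
  res_eq ω (.success s l' h)

theorem res_probL (ω : A) {T : Proc A} (hT : ¬ Proc.hasOmega ω T)
    (l : List (ℝ × Proc A)) :
    Res ω (Proc.pr l) T = (l.map fun x => algebraMap ℝ (RF A) x.1 * Res ω x.2 T).sum :=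
  res_eq ω (.probL l T (fun x => Res ω x.2 T) hT (fun x _ => res_spec ω x.2 T))

theorem res_probR (ω : A) (l : List (A × Proc A)) (l' : List (ℝ × Proc A)) :
    Res ω (Proc.nd l) (Proc.pr l')
      = (l'.map fun x => algebraMap ℝ (RF A) x.1 * Res ω (Proc.nd l) x.2).sum :=
  res_eq ω (.probR l l' (fun x => Res ω (Proc.nd l) x.2) (fun x _ => res_spec ω _ x.2))

noncomputable def rstep (ω : A) (u T : Proc A) (b : A) : RF A :=
  match u.step b, T.step b with
  | some ub, some Tb => Res ω ub Tb
  | _, _ => 0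

theorem rstep_eq (ω : A) {u T ub Tb : Proc A} {b : A}
    (h1 : u.step b = some ub) (h2 : T.step b = some Tb) :
    rstep ω u T b = Res ω ub Tb := by
  simp [rstep, h1, h2]

theorem rstep_congr (ω : A) {u T T' : Proc A} {b : A}
    (h : T.step b = T'.step b) : rstep ω u T b = rstep ω u T' b := by
  simp only [rstep, h]

theorem res_sync (ω : A) (l l' : List (A × Proc A)) (hω : ω ∉ l'.map Prod.fst) :
    Res ω (Proc.nd l) (Proc.nd l') =
      ∑ a ∈ (l.map Prod.fst).toFinset ∩ (l'.map Prod.fst).toFinset,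
        (RVar a / ∑ b ∈ (l.map Prod.fst).toFinset ∩ (l'.map Prod.fst).toFinset, RVar b)
          * rstep ω (Proc.nd l) (Proc.nd l') a :=
  res_eq ω (.sync l l' (fun a => rstep ω (Proc.nd l) (Proc.nd l') a) hω
    (fun a _ sa Ta h1 h2 => by show Proc.ResRel ω sa Ta (rstep ω (Proc.nd l) (Proc.nd l') a); rw [rstep_eq ω h1 h2]; exact res_spec ω sa Ta))
end ProofAux
namespace ProofAux
variable {A : Type} [DecidableEq A]
def prCount : Proc A → ℕ
  | .nd l => (l.attach.map (fun x => prCount x.1.2)).sum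
  | .pr l => 1 + (l.attach.map (fun x => prCount x.1.2)).sum
termination_by p => sizeOf p
decreasing_by
  all_goals
    (obtain ⟨⟨r, p⟩, hmem⟩ := x
     have h := List.sizeOf_lt_of_mem hmem
     simp at h ⊢
     omega)

theorem prCount_nd (l : List (A × Proc A)) :
    prCount (Proc.nd l) = (l.map (fun x => prCount x.2)).sum := by
  rw [prCount]
  exact congrArg List.sum (List.attach_map_val (l := l) (f := fun x => prCount x.2))

theorem prCount_pr (l : List (ℝ × Proc A)) :
    prCount (Proc.pr l) = 1 + (l.map (fun x => prCount x.2)).sum := by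
  rw [prCount]
  exact congrArg (1 + ·) (congrArg List.sum (List.attach_map_val (l := l) (f := fun x => prCount x.2)))

theorem noProb_of_prCount : ∀ (n : ℕ) (p : Proc A), sizeOf p ≤ n → prCount p = 0 →
    Proc.NoProb p := by
  intro n
  induction n with
  | zero => intro p h _; exfalso; cases p <;> simp at h
  | succ n ih =>
    intro p hp hc
    match p with
    | .pr l => rw [prCount_pr] at hc; omega
    | .nd l =>
      rw [prCount_nd] at hc
      refine Proc.NoProb.nd l (fun x hx => ?_)
      have hx0 : prCount x.2 = 0 :=
        List.sum_eq_zero_iff.mp hc _ (List.mem_map_of_mem hx)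
      have := sizeOf_snd_lt_nd hx
      exact ih x.2 (by omega) hx0

theorem list_le_sum {l : List ℕ} {x : ℕ} (h : x ∈ l) : x ≤ l.sum := by
  obtain ⟨l1, l2, rfl⟩ := List.append_of_mem h
  rw [List.sum_append, List.sum_cons]
  omega

theorem list_sum_map_add {β R : Type*} [AddCommMonoid R] (l : List β) (f g : β → R) :
    (l.map fun x => f x + g x).sum = (l.map f).sum + (l.map g).sum := by
  induction l with
  | nil => simp
  | cons a l ih => simp only [List.map_cons, List.sum_cons, ih]; abel

theorem list_sum_comm {β γ R : Type*} [AddCommMonoid R] (l1 : List β) (l2 : List γ)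
    (f : β → γ → R) :
    (l1.map fun b => (l2.map fun c => f b c).sum).sum
      = (l2.map fun c => (l1.map fun b => f b c).sum).sum := by
  induction l1 with
  | nil => simp
  | cons b l1 ih => simp only [List.map_cons, List.sum_cons, ih, list_sum_map_add]

theorem finset_list_sum_comm {β R : Type*} [AddCommMonoid R] (I : Finset A) (l : List β)
    (f : β → A → R) :
    (l.map fun x => ∑ a ∈ I, f x a).sum = ∑ a ∈ I, (l.map fun x => f x a).sum := by
  induction l with
  | nil => simp
  | cons x l ih => simp only [List.map_cons, List.sum_cons, ih, Finset.sum_add_distrib]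

theorem sum_weight_const {ms : List (ℝ × Proc A)} (h : (ms.map Prod.fst).sum = 1)
    (C : RF A) : (ms.map fun x => algebraMap ℝ (RF A) x.1 * C).sum = C := by
  rw [List.sum_map_mul_right]
  have : (ms.map fun x => algebraMap ℝ (RF A) x.1) = (ms.map Prod.fst).map (algebraMap ℝ (RF A)) := by
    rw [List.map_map]; rfl
  rw [this, ← map_list_sum (algebraMap ℝ (RF A)), h, map_one, one_mul]
end ProofAux
namespace ProofAux
variable {A : Type} [DecidableEq A]
theorem wf_nd_nodup {l : List (A × Proc A)} (h : Proc.WF (Proc.nd l)) :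
    (l.map Prod.fst).Nodup := by cases h with | nd _ h1 _ => exact h1

theorem wf_nd_mem {l : List (A × Proc A)} (h : Proc.WF (Proc.nd l))
    {x : A × Proc A} (hx : x ∈ l) : Proc.WF x.2 := by
  cases h with | nd _ _ h2 => exact h2 x hx

theorem wf_pr_mem {l : List (ℝ × Proc A)} (h : Proc.WF (Proc.pr l))
    {x : ℝ × Proc A} (hx : x ∈ l) : Proc.WF x.2 := by
  cases h with | pr _ _ _ h3 => exact h3 x hx

theorem wf_pr_sum {l : List (ℝ × Proc A)} (h : Proc.WF (Proc.pr l)) :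
    (l.map Prod.fst).sum = 1 := by cases h with | pr _ _ h2 _ => exact h2

theorem wf_pr_shape {l : List (ℝ × Proc A)} (h : Proc.WF (Proc.pr l))
    {x : ℝ × Proc A} (hx : x ∈ l) : ∃ l', x.2 = Proc.nd l' := by
  cases h with | pr _ h1 _ _ => exact (h1 x hx).2.2

/-- For a WF probabilistic process, the result on ANY test decomposes linearly. -/
theorem res_probL' (ω : A) {lu : List (ℝ × Proc A)} (hWF : Proc.WF (Proc.pr lu))
    (T : Proc A) :
    Res ω (Proc.pr lu) T = (lu.map fun j => algebraMap ℝ (RF A) j.1 * Res ω j.2 T).sum := by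
  by_cases hT : Proc.hasOmega ω T
  · match T with
    | .pr _ => exact absurd hT (by simp [Proc.hasOmega])
    | .nd m =>
      have hm : ω ∈ m.map Prod.fst := hT
      rw [res_success ω hm]
      rw [List.map_congr_left (fun j (_ : j ∈ lu) => by rw [res_success ω hm j.2])]
      exact (sum_weight_const (wf_pr_sum hWF) 1).symm
  · exact res_probL ω hT lu

/-- `ms` is a probabilistic decomposition ("mixture") of the test `S`. -/
def Mix (ω : A) (S : Proc A) (ms : List (ℝ × Proc A)) : Prop :=
  (ms.map Prod.fst).sum = 1 ∧
  ∀ u : Proc A, Proc.WF u →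
    Res ω u S = (ms.map fun x => algebraMap ℝ (RF A) x.1 * Res ω u x.2).sum

/-- To establish the mixture equation for all WF processes, the nondeterministic
case suffices. -/
theorem mix_ext (ω : A) {S : Proc A} {ms : List (ℝ × Proc A)}
    (h : ∀ lu : List (A × Proc A), Proc.WF (Proc.nd lu) → Res ω (Proc.nd lu) S
        = (ms.map fun x => algebraMap ℝ (RF A) x.1 * Res ω (Proc.nd lu) x.2).sum) :
    ∀ u : Proc A, Proc.WF u →
      Res ω u S = (ms.map fun x => algebraMap ℝ (RF A) x.1 * Res ω u x.2).sum := by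
  intro u hu
  match u with
  | .nd lu => exact h lu hu
  | .pr lu =>
    have hcomp : ∀ j ∈ lu, Res ω j.2 S
        = (ms.map fun x => algebraMap ℝ (RF A) x.1 * Res ω j.2 x.2).sum := by
      intro j hj
      obtain ⟨lj, hlj⟩ := wf_pr_shape hu hj
      rw [hlj]
      exact h lj (hlj ▸ wf_pr_mem hu hj)
    rw [res_probL' ω hu S]
    rw [List.map_congr_left (fun j hj => by rw [hcomp j hj])]
    rw [List.map_congr_left (fun j (_ : j ∈ lu) =>
      (List.sum_map_mul_left ms _ (algebraMap ℝ (RF A) j.1)).symm)]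
    rw [list_sum_comm]
    refine congrArg List.sum (List.map_congr_left (fun x _ => ?_))
    rw [res_probL' ω hu x.2, ← List.sum_map_mul_left]
    exact congrArg List.sum (List.map_congr_left (fun j _ => by ring))

/-- A WF probabilistic test is a mixture of its components. -/
theorem mix_pr (ω : A) {l' : List (ℝ × Proc A)} (hWF : Proc.WF (Proc.pr l')) :
    Mix ω (Proc.pr l') l' :=
  ⟨wf_pr_sum hWF, mix_ext ω (fun lu _ => res_probR ω lu l')⟩
end ProofAux
namespace ProofAux
variable {A : Type} [DecidableEq A]
theorem step_replace {l1 l2 : List (A × Proc A)} {a b : A} (hba : b ≠ a)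
    (S S' : Proc A) :
    Proc.step (Proc.nd (l1 ++ (a, S) :: l2)) b
      = Proc.step (Proc.nd (l1 ++ (a, S') :: l2)) b := by
  simp only [Proc.step, List.find?_append]
  have : ∀ S'' : Proc A, List.find? (fun x : A × Proc A => x.1 = b) ((a, S'') :: l2)
      = List.find? (fun x : A × Proc A => x.1 = b) l2 := by
    intro S''
    rw [List.find?_cons_of_neg]
    simp [Ne.symm hba]
  rw [this, this]

theorem step_self {l1 l2 : List (A × Proc A)} {a : A} (h : a ∉ l1.map Prod.fst)
    (S : Proc A) :
    Proc.step (Proc.nd (l1 ++ (a, S) :: l2)) a = some S := by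
  simp only [Proc.step, List.find?_append]
  have h1 : List.find? (fun x : A × Proc A => x.1 = a) l1 = none := by
    rw [List.find?_eq_none]
    intro x hx
    simp only [decide_eq_true_eq]
    exact fun he => h (he ▸ List.mem_map_of_mem (f := Prod.fst) hx)
  rw [h1, List.find?_cons_of_pos (p := fun x : A × Proc A => decide (x.1 = a)) (a := (a, S)) (l := l2) (by simp)]
  rfl

theorem mix_replace (ω : A) {S0 : Proc A} {ms0 : List (ℝ × Proc A)}
    (hmix : Mix ω S0 ms0) (l1 l2 : List (A × Proc A)) (a : A)
    (hnd : ((l1 ++ (a, S0) :: l2).map Prod.fst).Nodup) :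
    Mix ω (Proc.nd (l1 ++ (a, S0) :: l2))
      (ms0.map fun x => (x.1, Proc.nd (l1 ++ (a, x.2) :: l2))) := by
  obtain ⟨hsum, hres⟩ := hmix
  constructor
  · rw [List.map_map]
    exact hsum
  apply mix_ext
  intro lu hu
  rw [List.map_map]
  show Res ω (Proc.nd lu) (Proc.nd (l1 ++ (a, S0) :: l2))
    = (ms0.map fun x => algebraMap ℝ (RF A) x.1
        * Res ω (Proc.nd lu) (Proc.nd (l1 ++ (a, x.2) :: l2))).sum
  have hfst : ∀ S' : Proc A, ((l1 ++ (a, S') :: l2).map Prod.fst)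
      = ((l1 ++ (a, S0) :: l2).map Prod.fst) := by
    intro S'; simp
  by_cases hωm : ω ∈ ((l1 ++ (a, S0) :: l2).map Prod.fst)
  · rw [res_success ω hωm]
    rw [List.map_congr_left (fun x (_ : x ∈ ms0) => by
      rw [res_success ω ((hfst x.2).symm ▸ hωm) (Proc.nd lu)])]
    exact (sum_weight_const hsum 1).symm
  · -- sync case
    have ha1 : a ∉ l1.map Prod.fst := by
      rw [List.map_append, List.map_cons] at hnd
      intro hmem
      exact (List.disjoint_of_nodup_append hnd) hmem List.mem_cons_self
    rw [res_sync ω lu _ hωm]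
    have hsx : ∀ x ∈ ms0, Res ω (Proc.nd lu) (Proc.nd (l1 ++ (a, x.2) :: l2))
        = ∑ b ∈ (lu.map Prod.fst).toFinset
            ∩ (((l1 ++ (a, S0) :: l2)).map Prod.fst).toFinset,
          (RVar b / ∑ b' ∈ (lu.map Prod.fst).toFinset
            ∩ (((l1 ++ (a, S0) :: l2)).map Prod.fst).toFinset, RVar b')
            * rstep ω (Proc.nd lu) (Proc.nd (l1 ++ (a, x.2) :: l2)) b := by
      intro x _
      rw [res_sync ω lu _ (fun hmem => hωm ((hfst x.2) ▸ hmem))]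
      rw [hfst x.2]
    have e1 : (ms0.map fun x => algebraMap ℝ (RF A) x.1
          * Res ω (Proc.nd lu) (Proc.nd (l1 ++ (a, x.2) :: l2)))
        = ms0.map fun x => ∑ b ∈ (lu.map Prod.fst).toFinset
            ∩ (((l1 ++ (a, S0) :: l2)).map Prod.fst).toFinset,
          algebraMap ℝ (RF A) x.1
            * ((RVar b / ∑ b' ∈ (lu.map Prod.fst).toFinset
                ∩ (((l1 ++ (a, S0) :: l2)).map Prod.fst).toFinset, RVar b')
              * rstep ω (Proc.nd lu) (Proc.nd (l1 ++ (a, x.2) :: l2)) b) :=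
      List.map_congr_left (fun x hx => by rw [hsx x hx, Finset.mul_sum])
    rw [e1, finset_list_sum_comm]
    refine Finset.sum_congr rfl (fun b hb => ?_)
    by_cases hba : b = a
    · subst hba
      have hbu : b ∈ lu.map Prod.fst :=
        List.mem_toFinset.mp (Finset.mem_inter.mp hb).1
      obtain ⟨ub, hub⟩ := step_isSome hbu
      obtain ⟨xu, hxu, hxu2⟩ := step_mem hub
      have hwfu : Proc.WF ub := hxu2 ▸ wf_nd_mem hu hxu
      have hstep0 : Proc.step (Proc.nd (l1 ++ (b, S0) :: l2)) b = some S0 :=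
        step_self ha1 S0
      rw [rstep_eq ω hub hstep0, hres ub hwfu]
      have e2 : (ms0.map fun x => algebraMap ℝ (RF A) x.1
            * ((RVar b / ∑ b' ∈ (lu.map Prod.fst).toFinset
                ∩ (((l1 ++ (b, S0) :: l2)).map Prod.fst).toFinset, RVar b')
              * rstep ω (Proc.nd lu) (Proc.nd (l1 ++ (b, x.2) :: l2)) b))
          = ms0.map fun x => (RVar b / ∑ b' ∈ (lu.map Prod.fst).toFinset
                ∩ (((l1 ++ (b, S0) :: l2)).map Prod.fst).toFinset, RVar b')
              * (algebraMap ℝ (RF A) x.1 * Res ω ub x.2) :=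
        List.map_congr_left (fun x _ => by
          rw [rstep_eq ω hub (step_self ha1 x.2)]; ring)
      rw [e2, List.sum_map_mul_left]
    · have e3 : (ms0.map fun x => algebraMap ℝ (RF A) x.1
            * ((RVar b / ∑ b' ∈ (lu.map Prod.fst).toFinset
                ∩ (((l1 ++ (a, S0) :: l2)).map Prod.fst).toFinset, RVar b')
              * rstep ω (Proc.nd lu) (Proc.nd (l1 ++ (a, x.2) :: l2)) b))
          = ms0.map fun x => algebraMap ℝ (RF A) x.1
            * ((RVar b / ∑ b' ∈ (lu.map Prod.fst).toFinset
                ∩ (((l1 ++ (a, S0) :: l2)).map Prod.fst).toFinset, RVar b')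
              * rstep ω (Proc.nd lu) (Proc.nd (l1 ++ (a, S0) :: l2)) b) :=
        List.map_congr_left (fun x _ => by
          rw [rstep_congr ω (step_replace hba x.2 S0)])
      rw [e3]
      exact (sum_weight_const hsum _).symm
end ProofAux
namespace ProofAux
variable {A : Type} [DecidableEq A]
theorem mix_exists (ω : A) : ∀ (n : ℕ) (S : Proc A), sizeOf S ≤ n → Proc.WF S →
    0 < prCount S →
    ∃ ms, Mix ω S ms ∧ ∀ x ∈ ms, Proc.WF x.2 ∧ prCount x.2 < prCount S := by
  intro n
  induction n with
  | zero => intro S h; exfalso; cases S <;> simp at h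
  | succ n ih =>
    intro S hS hWF hpos
    match S with
    | .pr l =>
      refine ⟨l, mix_pr ω hWF, fun x hx => ⟨wf_pr_mem hWF hx, ?_⟩⟩
      rw [prCount_pr]
      have : prCount x.2 ∈ l.map (fun y => prCount y.2) := List.mem_map_of_mem hx
      have := list_le_sum this
      omega
    | .nd l =>
      have hex : ∃ y ∈ l, 0 < prCount y.2 := by
        by_contra hc
        push_neg at hc
        rw [prCount_nd] at hpos
        have : (l.map (fun y => prCount y.2)).sum = 0 := by
          apply List.sum_eq_zero
          intro z hz
          obtain ⟨y, hy, rfl⟩ := List.mem_map.mp hz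
          exact Nat.le_zero.mp (hc y hy)
        omega
      obtain ⟨y, hy, hy0⟩ := hex
      obtain ⟨l1, l2, rfl⟩ := List.append_of_mem hy
      obtain ⟨a, S0⟩ := y
      have hwfS0 : Proc.WF S0 := wf_nd_mem hWF hy
      have hsz : sizeOf S0 ≤ n := by
        have := sizeOf_snd_lt_nd hy
        simp only at this
        omega
      obtain ⟨ms0, hmix0, hms0⟩ := ih S0 hsz hwfS0 hy0
      refine ⟨ms0.map fun x => (x.1, Proc.nd (l1 ++ (a, x.2) :: l2)),
        mix_replace ω hmix0 l1 l2 a (wf_nd_nodup hWF), ?_⟩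
      intro x hx
      obtain ⟨z, hz, rfl⟩ := List.mem_map.mp hx
      obtain ⟨hwfz, hcz⟩ := hms0 z hz
      constructor
      · refine Proc.WF.nd _ ?_ ?_
        · have h0 := wf_nd_nodup hWF
          rw [List.map_append, List.map_cons] at h0 ⊢
          exact h0
        · intro w hw
          rcases List.mem_append.mp hw with hw1 | hw2
          · exact wf_nd_mem hWF (List.mem_append.mpr (Or.inl hw1))
          · rcases List.mem_cons.mp hw2 with rfl | hw3
            · exact hwfz
            · exact wf_nd_mem hWF (List.mem_append.mpr (Or.inr (List.mem_cons.mpr (Or.inr hw3))))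
      · rw [prCount_nd, prCount_nd]
        rw [List.map_append, List.map_append, List.map_cons, List.map_cons,
          List.sum_append, List.sum_append, List.sum_cons, List.sum_cons]
        simp only
        omega

theorem distinguish (ω : A) {s t : Proc A} (hs : Proc.WF s) (ht : Proc.WF t) :
    ∀ (n : ℕ) (T : Proc A), prCount T ≤ n → Proc.WF T →
    Res ω s T ≠ Res ω t T →
    ∃ T', Proc.WF T' ∧ Proc.NoProb T' ∧ Res ω s T' ≠ Res ω t T' := by
  intro n
  induction n with
  | zero =>
    intro T hT hWF hne
    exact ⟨T, hWF, noProb_of_prCount (sizeOf T) T le_rfl (Nat.le_zero.mp hT), hne⟩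
  | succ n ih =>
    intro T hT hWF hne
    rcases Nat.eq_zero_or_pos (prCount T) with h0 | hpos
    · exact ⟨T, hWF, noProb_of_prCount (sizeOf T) T le_rfl h0, hne⟩
    · obtain ⟨ms, ⟨_, hmeq⟩, hms⟩ := mix_exists ω (sizeOf T) T le_rfl hWF hpos
      have hx : ∃ x ∈ ms, Res ω s x.2 ≠ Res ω t x.2 := by
        by_contra hc
        push_neg at hc
        apply hne
        rw [hmeq s hs, hmeq t ht]
        exact congrArg List.sum (List.map_congr_left (fun x hx => by rw [hc x hx]))
      obtain ⟨x, hxms, hxne⟩ := hx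
      obtain ⟨hwfx, hcx⟩ := hms x hxms
      exact ih x.2 (by omega) hwfx hxne
end ProofAux
/-- Two processes are not testing equivalent if and only if there exists a test
with no probabilistic transitions whose results on the two processes differ;
i.e. probabilistic transitions add no distinguishing power to tests. -/
theorem not_testEquiv_iff_nonprob_distinguishing_test
    {A : Type} [DecidableEq A] (ω : A)
    (s t : Proc A) (hs : Proc.WF s) (ht : Proc.WF t)
    (hsω : Proc.NoOmega ω s) (htω : Proc.NoOmega ω t) :
    ¬ Proc.TestEquiv ω s t ↔
      ∃ T : Proc A, Proc.WF T ∧ Proc.NoProb T ∧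
        ∃ r r' : RF A, Proc.ResRel ω s T r ∧ Proc.ResRel ω t T r' ∧ r ≠ r' := by
  constructor
  · intro hne
    unfold Proc.TestEquiv at hne
    push_neg at hne
    obtain ⟨T, hWFT, r, hiff⟩ := hne
    have hres : ProofAux.Res ω s T ≠ ProofAux.Res ω t T := by
      intro h
      rcases hiff with ⟨h1, hn⟩ | ⟨hn, h2⟩
      · rw [ProofAux.res_eq ω h1] at h
        exact hn (h ▸ ProofAux.res_spec ω t T)
      · rw [ProofAux.res_eq ω h2] at h
        exact hn (h.symm ▸ ProofAux.res_spec ω s T)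
    obtain ⟨T', hWF', hNP', hne'⟩ :=
      ProofAux.distinguish ω hs ht (ProofAux.prCount T) T le_rfl hWFT hres
    exact ⟨T', hWF', hNP', ProofAux.Res ω s T', ProofAux.Res ω t T',
      ProofAux.res_spec ω s T', ProofAux.res_spec ω t T', hne'⟩
  · rintro ⟨T, hWFT, _, r, r', h1, h2, hne⟩ hTE
    exact hne (ProofAux.resrel_det ω ((hTE T hWFT r).mp h1) h2)
end

section
/- Let M₁, …, Mₙ be subsets of a family of menus and define, for a binary string w = i₁…iₙ, the intersection ∩ₖ Mₖ^{iₖ} where Mₖ^1 = Mₖ and Mₖ^0 = Mₖᶜ. If x_w are real (or rational-function) values indexed by binary strings of length n satisfying x_{u0v} + x_{u1v} = 0 for every decomposition and position, together with the equation Σ_w (a/(a + Σ_{k: wₖ=1} bₖ))·x_w = 0 where a, b₁,…,bₙ are distinct positive-degree irreducible pairwise coprime monomials, then x_w = 0 for all w. -/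
/-- The rational function given by the variable `a` (the synchronized action). -/
noncomputable def rfA (n : ℕ) : FractionRing (MvPolynomial (Fin (n + 1)) ℝ) :=
  algebraMap (MvPolynomial (Fin (n + 1)) ℝ) _ (MvPolynomial.X 0)

/-- The rational function given by the variable `bₖ`. -/
noncomputable def rfB (n : ℕ) (k : Fin n) :
    FractionRing (MvPolynomial (Fin (n + 1)) ℝ) :=
  algebraMap (MvPolynomial (Fin (n + 1)) ℝ) _ (MvPolynomial.X k.succ)

set_option maxHeartbeats 1000000

open Finset

lemma binom_alt (n : ℕ) :
    ∑ k ∈ Finset.range (n + 1), (-1 : ℝ) ^ k * ((n+1).choose (k+1)) = 1 := by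
  have h0 : (∑ m ∈ range (n + 2), ((-1 : ℤ) ^ m * (n+1).choose m)) = 0 := by
    have := Int.alternating_sum_range_choose (n := n+1)
    simpa using this
  have h1 : (∑ m ∈ range (n + 2), ((-1 : ℤ) ^ m * (n+1).choose m))
      = (∑ k ∈ range (n+1), (-1:ℤ)^(k+1) * (n+1).choose (k+1)) + 1 := by
    rw [Finset.sum_range_succ' (fun m => ((-1:ℤ))^m * (n+1).choose m) (n+1)]
    simp
  have h2 : (∑ k ∈ range (n+1), (-1:ℤ)^k * ((n+1).choose (k+1) : ℤ)) = 1 := by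
    have := h1 ▸ h0
    have h3 : (∑ k ∈ range (n+1), (-1:ℤ)^(k+1) * (n+1).choose (k+1)) = -1 := by linarith
    calc (∑ k ∈ range (n+1), (-1:ℤ)^k * ((n+1).choose (k+1):ℤ))
        = -(∑ k ∈ range (n+1), (-1:ℤ)^(k+1) * (n+1).choose (k+1)) := by
          rw [← Finset.sum_neg_distrib]; apply Finset.sum_congr rfl; intro k _; ring
      _ = 1 := by rw [h3]; ring
  exact_mod_cast h2

lemma binom_sum (n : ℕ) :
    ∑ k ∈ Finset.range (n + 1), (n.choose k : ℝ) * ((-1 : ℝ) ^ k / (k + 1)) = 1 / (n + 1) := by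
  have hn : ((n:ℝ) + 1) ≠ 0 := by positivity
  rw [eq_div_iff hn, Finset.sum_mul]
  have step : ∀ k ∈ Finset.range (n+1),
      (n.choose k : ℝ) * ((-1 : ℝ) ^ k / (k + 1)) * ((n:ℝ)+1)
        = (-1:ℝ)^k * ((n+1).choose (k+1)) := by
    intro k _
    have hk : ((k:ℝ) + 1) ≠ 0 := by positivity
    have h' : ((n:ℝ)+1) * (n.choose k) = ((n+1).choose (k+1)) * ((k:ℝ)+1) := by
      exact_mod_cast Nat.add_one_mul_choose_eq n k
    field_simp
    linear_combination h'
  rw [Finset.sum_congr rfl step]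
  exact binom_alt n

lemma sum_bool_fun (n : ℕ) (f : ℕ → ℝ) :
    ∑ w : Fin n → Bool, f (Finset.univ.filter (fun k => w k = true)).card
      = ∑ k ∈ Finset.range (n+1), (n.choose k : ℝ) * f k := by
  have e : ∑ w : Fin n → Bool, f (Finset.univ.filter (fun k => w k = true)).card
      = ∑ s ∈ (Finset.univ : Finset (Fin n)).powerset, f s.card := by
    rw [Finset.powerset_univ]
    apply Finset.sum_nbij' (i := fun w => Finset.univ.filter (fun k => w k = true))
      (j := fun s k => decide (k ∈ s))
    · intro w _; exact Finset.mem_univ _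
    · intro s _; exact Finset.mem_univ _
    · intro w _; funext k; simp
    · intro s _; ext k; simp
    · intro w _; rfl
  rw [e, Finset.sum_powerset_apply_card]
  simp [Finset.card_univ, nsmul_eq_mul]

open MvPolynomial in
lemma keySum (n : ℕ) :
    ∑ w : Fin n → Bool,
      (-1 : FractionRing (MvPolynomial (Fin (n+1)) ℝ))
          ^ (Finset.univ.filter (fun k => w k = true)).card *
      (rfA n / (rfA n + ∑ k ∈ Finset.univ.filter (fun k : Fin n => w k = true),
        rfB n k)) ≠ 0 := by
  classical
  set φ : MvPolynomial (Fin (n+1)) ℝ →+* FractionRing (MvPolynomial (Fin (n+1)) ℝ) :=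
    (algebraMap _ _ : MvPolynomial (Fin (n+1)) ℝ →+* FractionRing (MvPolynomial (Fin (n+1)) ℝ))
    with hφ
  have hinj : Function.Injective φ :=
    IsFractionRing.injective (MvPolynomial (Fin (n+1)) ℝ) (FractionRing (MvPolynomial (Fin (n+1)) ℝ))
  set c : (Fin n → Bool) → ℕ := fun w => (Finset.univ.filter (fun k => w k = true)).card with hc
  set D : (Fin n → Bool) → MvPolynomial (Fin (n+1)) ℝ := fun w =>
    X 0 + ∑ k ∈ Finset.univ.filter (fun k : Fin n => w k = true), X k.succ with hD
  have heval : ∀ w, MvPolynomial.eval (fun _ => (1:ℝ)) (D w) = 1 + c w := by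
    intro w
    simp [hD, hc]
  have hD0 : ∀ w, D w ≠ 0 := by
    intro w h
    have h2 := heval w
    rw [h, map_zero] at h2
    have : (0:ℝ) ≤ (c w : ℝ) := Nat.cast_nonneg _
    linarith
  have hφD : ∀ w, φ (D w) ≠ 0 := by
    intro w h
    exact hD0 w (hinj (by simpa using h))
  have hDK : ∀ w : Fin n → Bool,
      rfA n + ∑ k ∈ Finset.univ.filter (fun k : Fin n => w k = true), rfB n k
        = φ (D w) := by
    intro w
    simp [rfA, rfB, hD, map_add, map_sum]
    rfl
  intro h
  have h' : ∑ w : Fin n → Bool,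
      (-1 : FractionRing (MvPolynomial (Fin (n+1)) ℝ)) ^ c w * (rfA n / φ (D w)) = 0 := by
    rw [← h]
    exact Finset.sum_congr rfl fun w _ => by rw [hDK w]
  set P : MvPolynomial (Fin (n+1)) ℝ := ∑ w : Fin n → Bool,
    (-1 : MvPolynomial (Fin (n+1)) ℝ) ^ (c w) * (X 0 * ∏ u ∈ Finset.univ.erase w, D u) with hP
  have hφP : φ P = (∑ w : Fin n → Bool,
        (-1 : FractionRing (MvPolynomial (Fin (n+1)) ℝ)) ^ (c w) * (rfA n / φ (D w)))
      * φ (∏ u : Fin n → Bool, D u) := by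
    rw [Finset.sum_mul, hP, map_sum]
    apply Finset.sum_congr rfl
    intro w _
    rw [map_mul, map_mul, map_pow, map_neg, map_one, map_prod]
    have hsplit : φ (∏ u : Fin n → Bool, D u)
        = φ (D w) * ∏ u ∈ Finset.univ.erase w, φ (D u) := by
      rw [map_prod, ← Finset.mul_prod_erase _ _ (Finset.mem_univ w)]
    rw [hsplit]
    have hx : φ (X 0) = rfA n := rfl
    rw [hx]
    field_simp [hφD w]
  have hP0 : P = 0 := by
    apply hinj
    rw [hφP, h', zero_mul, map_zero]
  have hevalP := congrArg (MvPolynomial.eval (fun _ => (1:ℝ))) hP0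
  rw [hP, map_zero, map_sum] at hevalP
  have hterm : ∀ w : Fin n → Bool,
      MvPolynomial.eval (fun _ => (1:ℝ))
        ((-1 : MvPolynomial (Fin (n+1)) ℝ) ^ (c w) * (X 0 * ∏ u ∈ Finset.univ.erase w, D u))
      = (-1:ℝ) ^ (c w) * ∏ u ∈ Finset.univ.erase w, (1 + (c u : ℝ)) := by
    intro w
    rw [map_mul, map_mul, map_pow, map_neg, map_one, map_prod, eval_X]
    rw [Finset.prod_congr rfl (fun u _ => heval u)]
    ring
  simp only [hterm] at hevalP
  set Pr : ℝ := ∏ u : Fin n → Bool, (1 + (c u : ℝ)) with hPr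
  have hPrpos : 0 < Pr := Finset.prod_pos (fun u _ => by positivity)
  have herase : ∀ w : Fin n → Bool,
      ∏ u ∈ Finset.univ.erase w, (1 + (c u : ℝ)) = Pr / (1 + (c w : ℝ)) := by
    intro w
    have hmul := Finset.mul_prod_erase Finset.univ (fun u => (1 + (c u : ℝ)))
      (Finset.mem_univ w)
    have hpos : (0:ℝ) < 1 + (c w : ℝ) := by positivity
    rw [eq_div_iff (ne_of_gt hpos), mul_comm]
    exact hmul
  simp only [herase] at hevalP
  have hsum : ∑ w : Fin n → Bool, (-1:ℝ) ^ (c w) * (Pr / (1 + (c w : ℝ)))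
      = Pr * ∑ w : Fin n → Bool, ((-1:ℝ) ^ (c w) / ((c w : ℝ) + 1)) := by
    rw [Finset.mul_sum]
    apply Finset.sum_congr rfl
    intro w _
    rw [add_comm (1:ℝ)]
    ring
  rw [hsum] at hevalP
  have hfin : ∑ w : Fin n → Bool, ((-1:ℝ) ^ (c w) / ((c w : ℝ) + 1)) = 1 / (n+1) := by
    have hsb := sum_bool_fun n (fun k => (-1:ℝ)^k / (k+1))
    rw [hc]
    rw [show (∑ w : Fin n → Bool,
        ((-1:ℝ) ^ ((Finset.univ.filter (fun k => w k = true)).card)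
          / (((Finset.univ.filter (fun k => w k = true)).card : ℝ) + 1)))
      = ∑ w : Fin n → Bool, (fun k : ℕ => (-1:ℝ)^k / (k+1))
          ((Finset.univ.filter (fun k => w k = true)).card) from rfl]
    rw [hsb, binom_sum n]
  rw [hfin] at hevalP
  have hpos2 : (0:ℝ) < 1/((n:ℝ)+1) := by positivity
  have hcon : (0:ℝ) < Pr * (1/((n:ℝ)+1)) := mul_pos hPrpos hpos2
  exact absurd hevalP (ne_of_gt hcon)


/-- If values `x w` indexed by binary strings `w ∈ {0,1}ⁿ` satisfy all the pair
equations `x_{u0v} + x_{u1v} = 0` (for every position and surrounding bits)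
together with the first-row equation
`Σ_w (a / (a + Σ_{k : wₖ = 1} bₖ)) · x w = 0` over the field of rational
functions in the distinct variables `a, b₁, …, bₙ`, then `x w = 0` for all `w`. -/
theorem linear_system_only_zero_solution (n : ℕ)
    (x : (Fin n → Bool) → FractionRing (MvPolynomial (Fin (n + 1)) ℝ))
    (h1 : ∀ (w : Fin n → Bool) (k : Fin n),
      x (Function.update w k false) + x (Function.update w k true) = 0)
    (h2 : ∑ w : Fin n → Bool,
      (rfA n / (rfA n + ∑ k ∈ Finset.univ.filter (fun k : Fin n => w k = true),
        rfB n k)) * x w = 0) :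
    ∀ w : Fin n → Bool, x w = 0 := by
  classical
  set c : (Fin n → Bool) → ℕ := fun w => (Finset.univ.filter (fun k => w k = true)).card
    with hc
  have hsign : ∀ m : ℕ, ∀ w : Fin n → Bool, c w = m →
      x w = (-1 : FractionRing (MvPolynomial (Fin (n+1)) ℝ)) ^ (c w)
        * x (fun _ => false) := by
    intro m
    induction m with
    | zero =>
      intro w hw
      have hwf : w = fun _ => false := by
        funext k
        by_contra hk
        have hkt : w k = true := by
          cases hwk : w k
          · exact absurd hwk hk
          · rfl
        have hmem : k ∈ Finset.univ.filter (fun k => w k = true) := by simp [hkt]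
        have hpos := Finset.card_pos.mpr ⟨k, hmem⟩
        simp only [hc] at hw
        omega
      subst hwf
      rw [hw]
      simp
    | succ m ih =>
      intro w hw
      obtain ⟨k, hk⟩ : ∃ k, w k = true := by
        by_contra hcon
        push_neg at hcon
        have hemp : Finset.univ.filter (fun k => w k = true) = ∅ := by
          apply Finset.filter_eq_empty_iff.mpr
          intro k _
          exact hcon k
        simp only [hc, hemp] at hw
        simp at hw
      have hupd : Function.update w k true = w := by
        funext j
        rcases eq_or_ne j k with rfl | hj
        · simp [hk]
        · simp [Function.update_of_ne hj]
      have h1' := h1 w k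
      rw [hupd] at h1'
      set w' := Function.update w k false with hw'
      have hfil : Finset.univ.filter (fun j => w' j = true)
          = (Finset.univ.filter (fun j => w j = true)).erase k := by
        ext j
        rcases eq_or_ne j k with rfl | hj
        · simp [hw']
        · simp [hw', Function.update_of_ne hj, hj]
      have hcw' : c w' = m := by
        simp only [hc]
        rw [hfil, Finset.card_erase_of_mem (by simp [hk])]
        simp only [hc] at hw
        omega
      have hxw' := ih w' hcw'
      have hxw : x w = - x w' := (neg_eq_of_add_eq_zero_right h1').symm
      rw [hxw, hxw', hcw', hw]
      ring
  have hsign' : ∀ w : Fin n → Bool,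
      x w = (-1 : FractionRing (MvPolynomial (Fin (n+1)) ℝ)) ^ (c w)
        * x (fun _ => false) := fun w => hsign (c w) w rfl
  have h2' : (∑ w : Fin n → Bool,
      (-1 : FractionRing (MvPolynomial (Fin (n+1)) ℝ)) ^ (c w) *
      (rfA n / (rfA n + ∑ k ∈ Finset.univ.filter (fun k : Fin n => w k = true),
        rfB n k))) * x (fun _ => false) = 0 := by
    rw [Finset.sum_mul, ← h2]
    apply Finset.sum_congr rfl
    intro w _
    rw [hsign' w]
    ring
  have hx0 : x (fun _ => false) = 0 := by
    rcases mul_eq_zero.mp h2' with h | h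
    · exact absurd h (keySum n)
    · exact h
  intro w
  rw [hsign' w, hx0, mul_zero]
end
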